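/- arXiv:2402.02702 — 4 statements merged into one kernel-verified Lean document; each statement's English description precedes it below -/
import Mathlib

section
/- Exact second-order expansion of the Scenario 2 estimating functional (from the proof of Theorem 4, Supplement I, with q known): for all admissible nuisance candidates μ̃₁₁, μ̃₁₀, μ̃₀₀, τ̃, π̃, writing r := μ₁₁/μ₁₀ and r̃ := μ̃₁₁/μ̃₁₀, E[ H₂(μ̃₁₁, μ̃₁₀, μ̃₀₀, τ̃, π̃) ] − α₂ = E[ (r̃(X) − r(X)) · ( μ₀₀(X) − (τ̃(X)/τ(X)) · (μ̃₀₀(X)/μ̃₁₀(X)) · μ₁₀(X) ) + r̃(X) · (1 − π(X)/π̃(X)) · (μ̃₀₀(X) − μ₀₀(X)) | S = 0 ]. -/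
open MeasureTheory

/-- `m` is a version of the conditional expectation `E[Z ∣ X; B]`. -/
def IsVersion {Ω E : Type*} [MeasurableSpace Ω] [MeasurableSpace E]
    (P : Measure Ω) (X : Ω → E) (Z : Ω → ℝ) (B : Set Ω) (m : E → ℝ) : Prop :=
  Measurable m ∧
    ∀ h : E → ℝ, Measurable h → (∃ C, ∀ x, |h x| ≤ C) →
      ∫ ω in B, Z ω * h (X ω) ∂P = ∫ ω in B, m (X ω) * h (X ω) ∂P

/-- Conditional mean `E[Z ∣ B]` of a real random variable given an event `B`. -/
noncomputable def condMean {Ω : Type*} [MeasurableSpace Ω]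
    (P : Measure Ω) (Z : Ω → ℝ) (B : Set Ω) : ℝ :=
  (∫ ω in B, Z ω ∂P) / (P B).toReal

/-- Admissible nuisance candidates for Scenario 2 (with propensity candidate `p`). -/
def Admissible2 {Ω E : Type*} [MeasurableSpace Ω] [MeasurableSpace E]
    (P : Measure Ω) (X : Ω → E) (ε M : ℝ) (m11 m10 m00 t p : E → ℝ) : Prop :=
  Measurable m11 ∧ Measurable m10 ∧ Measurable m00 ∧ Measurable t ∧ Measurable p ∧
    (∀ x, ε ≤ p x ∧ p x ≤ 1 - ε) ∧
    ∀ᵐ ω ∂P, ε ≤ |m10 (X ω)| ∧ |m11 (X ω)| ≤ M ∧ |m10 (X ω)| ≤ M ∧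
      |m00 (X ω)| ≤ M ∧ 0 ≤ t (X ω) ∧ t (X ω) ≤ M

/-- The Scenario 2 uncentered estimating function `H₂`, with `κ = 1/P(S=0)`. -/
noncomputable def H2 {Ω E : Type*} [MeasurableSpace Ω]
    (P : Measure Ω) (X : Ω → E) (S A Y : Ω → ℝ) (q m11 m10 m00 t p : E → ℝ) :
    Ω → ℝ := fun ω =>
  (P {ω' | S ω' = 0}).toReal⁻¹ *
    ((1 - S ω) * (m11 (X ω) / m10 (X ω)) *
        (m00 (X ω) + (1 - A ω) / p (X ω) * (Y ω - m00 (X ω))) +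
      S ω * t (X ω) * (m00 (X ω) / m10 (X ω)) *
        (A ω / q (X ω) * (Y ω - m11 (X ω)) -
          (1 - A ω) / (1 - q (X ω)) * (m11 (X ω) / m10 (X ω)) * (Y ω - m10 (X ω))))

private lemma pb {a b ca cb : ℝ} (ha : |a| ≤ ca) (hb : |b| ≤ cb) : |a * b| ≤ ca * cb := by
  rw [abs_mul]
  exact mul_le_mul ha hb (abs_nonneg _) ((abs_nonneg a).trans ha)

private lemma db {a b ca e : ℝ} (he : 0 < e) (ha : |a| ≤ ca) (hb : e ≤ |b|) : |a / b| ≤ ca / e := by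
  rw [abs_div]
  exact div_le_div₀ ((abs_nonneg a).trans ha) ha he hb

private lemma sb {a b ca cb : ℝ} (ha : |a| ≤ ca) (hb : |b| ≤ cb) : |a - b| ≤ ca + cb :=
  (abs_sub a b).trans (add_le_add ha hb)

private lemma intbdd {Ω : Type*} [MeasurableSpace Ω] {P : Measure Ω}
    [IsFiniteMeasure P] {f : Ω → ℝ} (hf : AEStronglyMeasurable f P) {C : ℝ}
    (h : ∀ᵐ ω ∂P, |f ω| ≤ C) : Integrable f P :=
  (integrable_const C).mono' hf (by simpa using h)

private lemma setIntegral_chi_mul {Ω : Type*} [MeasurableSpace Ω] (P : Measure Ω)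
    {χ : Ω → ℝ} {T : Set Ω} (hT : MeasurableSet T)
    (hχ : ∀ ω, (ω ∈ T → χ ω = 1) ∧ (ω ∉ T → χ ω = 0))
    (B : Set Ω) (f : Ω → ℝ) :
    ∫ ω in B, χ ω * f ω ∂P = ∫ ω in B ∩ T, f ω ∂P := by
  have h1 : ∀ ω, χ ω * f ω = T.indicator f ω := by
    intro ω
    by_cases hω : ω ∈ T
    · simp [Set.indicator_of_mem hω, (hχ ω).1 hω]
    · simp [Set.indicator_of_notMem hω, (hχ ω).2 hω]
  calc ∫ ω in B, χ ω * f ω ∂P = ∫ ω in B, T.indicator f ω ∂P := by simp only [h1]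
    _ = ∫ ω in B ∩ T, f ω ∂P := setIntegral_indicator hT

private lemma isVersion_ae_bdd {Ω E : Type*} [MeasurableSpace Ω] [MeasurableSpace E]
    {P : Measure Ω} [IsProbabilityMeasure P] {X : Ω → E} {Z : Ω → ℝ} {B : Set Ω} {m : E → ℝ}
    (hv : IsVersion P X Z B m) (h : E → ℝ) (hh : Measurable h) {C : ℝ}
    (hC : ∀ᵐ ω ∂P, |h (X ω)| ≤ C) :
    ∫ ω in B, Z ω * h (X ω) ∂P = ∫ ω in B, m (X ω) * h (X ω) ∂P := by
  set C' := max C 0 with hC'def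
  have hC'0 : 0 ≤ C' := le_max_right C 0
  set h' : E → ℝ := fun x => max (-C') (min C' (h x)) with hh'def
  have hmeas : Measurable h' := measurable_const.max (measurable_const.min hh)
  have hbd : ∀ x, |h' x| ≤ C' := by
    intro x
    rw [abs_le]
    refine ⟨le_max_left _ _, max_le (by linarith) (min_le_left _ _)⟩
  have heq : ∀ᵐ ω ∂P, h' (X ω) = h (X ω) := by
    filter_upwards [hC] with ω hω
    have h1 : -C' ≤ h (X ω) ∧ h (X ω) ≤ C' := by
      have := abs_le.mp (hω.trans (le_max_left C 0))
      exact ⟨this.1, this.2⟩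
    rw [hh'def]
    simp only [min_eq_right h1.2, max_eq_right h1.1]
  calc ∫ ω in B, Z ω * h (X ω) ∂P
      = ∫ ω in B, Z ω * h' (X ω) ∂P :=
        integral_congr_ae (ae_restrict_of_ae (heq.mono fun ω e => by dsimp only; rw [e]))
    _ = ∫ ω in B, m (X ω) * h' (X ω) ∂P := hv.2 h' hmeas ⟨C', hbd⟩
    _ = ∫ ω in B, m (X ω) * h (X ω) ∂P :=
        integral_congr_ae (ae_restrict_of_ae (heq.mono fun ω e => by dsimp only; rw [e]))

set_option maxHeartbeats 2000000 in
/-- Exact second-order expansion of the Scenario 2 estimating functional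
(proof of Theorem 4, Supplement I, with `q` known): for all admissible nuisance
candidates, writing `r = μ₁₁/μ₁₀` and `r̃ = μ̃₁₁/μ̃₁₀` and `τ = (1−g)/g`,
`E[H₂(μ̃₁₁,μ̃₁₀,μ̃₀₀,τ̃,π̃)] − α₂
  = E[(r̃(X)−r(X))·(μ₀₀(X) − (τ̃(X)/τ(X))·(μ̃₀₀(X)/μ̃₁₀(X))·μ₁₀(X))
      + r̃(X)·(1 − π(X)/π̃(X))·(μ̃₀₀(X) − μ₀₀(X)) ∣ S = 0]`. -/
theorem H2_second_order_expansion
    {Ω E : Type*} [MeasurableSpace Ω] [MeasurableSpace E]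
    (P : Measure Ω) [IsProbabilityMeasure P]
    (X : Ω → E) (S A Y : Ω → ℝ)
    (hX : Measurable X) (hS : Measurable S) (hA : Measurable A) (hY : Measurable Y)
    (hS01 : ∀ ω, S ω = 0 ∨ S ω = 1) (hA01 : ∀ ω, A ω = 0 ∨ A ω = 1)
    (hPS0 : 0 < P {ω | S ω = 0}) (hPS0A0 : 0 < P {ω | S ω = 0 ∧ A ω = 0})
    (hPS1A1 : 0 < P {ω | S ω = 1 ∧ A ω = 1})
    (hPS1A0 : 0 < P {ω | S ω = 1 ∧ A ω = 0})
    (μ11 μ10 μ00 π g q : E → ℝ)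
    (hμ11 : IsVersion P X Y {ω | S ω = 1 ∧ A ω = 1} μ11)
    (hμ10 : IsVersion P X Y {ω | S ω = 1 ∧ A ω = 0} μ10)
    (hμ00 : IsVersion P X Y {ω | S ω = 0 ∧ A ω = 0} μ00)
    (hπ : IsVersion P X (fun ω => 1 - A ω) {ω | S ω = 0} π)
    (hg : IsVersion P X S Set.univ g)
    (hq : IsVersion P X A {ω | S ω = 1} q)
    (ε M : ℝ) (hε0 : 0 < ε) (hε1 : ε < 1) (hM : 1 ≤ M)
    (hbd : ∀ᵐ ω ∂P,
      ε ≤ g (X ω) ∧ g (X ω) ≤ 1 - ε ∧ ε ≤ q (X ω) ∧ q (X ω) ≤ 1 - ε ∧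
      ε ≤ |μ10 (X ω)| ∧ |μ11 (X ω)| ≤ M ∧ |μ10 (X ω)| ≤ M ∧ |μ00 (X ω)| ≤ M ∧
      |Y ω| ≤ M ∧ (1 - g (X ω)) / g (X ω) ≤ M)
    (hπbd : ∀ᵐ ω ∂P, S ω = 0 → ε ≤ π (X ω) ∧ π (X ω) ≤ 1 - ε) :
    ∀ m11 m10 m00 t p : E → ℝ, Admissible2 P X ε M m11 m10 m00 t p →
      (∫ ω, H2 P X S A Y q m11 m10 m00 t p ω ∂P) -
          condMean P (fun ω => μ11 (X ω) / μ10 (X ω) * μ00 (X ω)) {ω | S ω = 0}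
        = condMean P (fun ω =>
            (m11 (X ω) / m10 (X ω) - μ11 (X ω) / μ10 (X ω)) *
              (μ00 (X ω) -
                t (X ω) / ((1 - g (X ω)) / g (X ω)) *
                  (m00 (X ω) / m10 (X ω)) * μ10 (X ω)) +
            m11 (X ω) / m10 (X ω) * (1 - π (X ω) / p (X ω)) *
              (m00 (X ω) - μ00 (X ω))) {ω | S ω = 0} := by
  intro n11 n10 n00 t p hadm
  obtain ⟨hmn11, hmn10, hmn00, hmt, hmp, hp, hnbd⟩ := hadm
  -- measurable sets
  have mS0 : MeasurableSet {ω | S ω = 0} := hS (measurableSet_singleton 0)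
  have mS1 : MeasurableSet {ω | S ω = 1} := hS (measurableSet_singleton 1)
  have mA0 : MeasurableSet {ω | A ω = 0} := hA (measurableSet_singleton 0)
  have mA1 : MeasurableSet {ω | A ω = 1} := hA (measurableSet_singleton 1)
  have hc : (0:ℝ) < (P {ω | S ω = 0}).toReal :=
    ENNReal.toReal_pos hPS0.ne' (measure_ne_top P _)
  -- indicator facts
  have hA1 : ∀ ω, |S ω| ≤ 1 ∧ |1 - S ω| ≤ 1 ∧ |A ω| ≤ 1 ∧ |1 - A ω| ≤ 1 := by
    intro ω
    rcases hS01 ω with h | h <;> rcases hA01 ω with h' | h' <;> simp [h, h']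
  have chiS0 : ∀ ω, (ω ∈ {ω | S ω = 0} → 1 - S ω = 1) ∧ (ω ∉ {ω | S ω = 0} → 1 - S ω = 0) := by
    intro ω
    constructor
    · intro h
      have h' : S ω = 0 := h
      rw [h']; ring
    · intro h
      rcases hS01 ω with h' | h'
      · exact absurd h' h
      · rw [h']; ring
  have chiS1 : ∀ ω, (ω ∈ {ω | S ω = 1} → S ω = 1) ∧ (ω ∉ {ω | S ω = 1} → S ω = 0) := by
    intro ω
    constructor
    · intro h; exact h
    · intro h
      rcases hS01 ω with h' | h'
      · exact h'
      · exact absurd h' h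
  have chiA0 : ∀ ω, (ω ∈ {ω | A ω = 0} → 1 - A ω = 1) ∧ (ω ∉ {ω | A ω = 0} → 1 - A ω = 0) := by
    intro ω
    constructor
    · intro h
      have h' : A ω = 0 := h
      rw [h']; ring
    · intro h
      rcases hA01 ω with h' | h'
      · exact absurd h' h
      · rw [h']; ring
  have chiA1 : ∀ ω, (ω ∈ {ω | A ω = 1} → A ω = 1) ∧ (ω ∉ {ω | A ω = 1} → A ω = 0) := by
    intro ω
    constructor
    · intro h; exact h
    · intro h
      rcases hA01 ω with h' | h'
      · exact h'
      · exact absurd h' h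
  -- auxiliary nuisance combinations
  obtain ⟨h00, h00def⟩ : ∃ f : E → ℝ, f = fun x => n11 x / n10 x / p x := ⟨_, rfl⟩
  obtain ⟨hpf, hpfdef⟩ : ∃ f : E → ℝ, f = fun x => h00 x * (μ00 x - n00 x) := ⟨_, rfl⟩
  obtain ⟨ha, hadef⟩ : ∃ f : E → ℝ, f = fun x => t x * (n00 x / n10 x) / q x := ⟨_, rfl⟩
  obtain ⟨hA2, hA2def⟩ : ∃ f : E → ℝ, f = fun x => ha x * (μ11 x - n11 x) := ⟨_, rfl⟩
  obtain ⟨hb, hbdef⟩ : ∃ f : E → ℝ,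
    f = fun x => t x * (n00 x / n10 x) * (n11 x / n10 x) / (1 - q x) := ⟨_, rfl⟩
  obtain ⟨hB2, hB2def⟩ : ∃ f : E → ℝ, f = fun x => hb x * (μ10 x - n10 x) := ⟨_, rfl⟩
  obtain ⟨k2, k2def⟩ : ∃ f : E → ℝ,
    f = fun x => t x * (n00 x / n10 x) * ((μ11 x - n11 x) - n11 x / n10 x * (μ10 x - n10 x)) :=
    ⟨_, rfl⟩
  obtain ⟨k3, k3def⟩ : ∃ f : E → ℝ, f = fun x => g x / (1 - g x) * k2 x := ⟨_, rfl⟩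
  -- measurability
  have mh00 : Measurable h00 := by rw [h00def]; exact (hmn11.div hmn10).div hmp
  have mhpf : Measurable hpf := by rw [hpfdef]; exact mh00.mul (hμ00.1.sub hmn00)
  have mha : Measurable ha := by rw [hadef]; exact (hmt.mul (hmn00.div hmn10)).div hq.1
  have mhA2 : Measurable hA2 := by rw [hA2def]; exact mha.mul (hμ11.1.sub hmn11)
  have mhb : Measurable hb := by
    rw [hbdef]
    exact ((hmt.mul (hmn00.div hmn10)).mul (hmn11.div hmn10)).div (measurable_const.sub hq.1)
  have mhB2 : Measurable hB2 := by rw [hB2def]; exact mhb.mul (hμ10.1.sub hmn10)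
  have mk2 : Measurable k2 := by
    rw [k2def]
    exact (hmt.mul (hmn00.div hmn10)).mul
      ((hμ11.1.sub hmn11).sub ((hmn11.div hmn10).mul (hμ10.1.sub hmn10)))
  have mk3 : Measurable k3 := by
    rw [k3def]; exact (hg.1.div (measurable_const.sub hg.1)).mul mk2
  -- the master a.e. bound
  have AE1 : ∀ᵐ ω ∂P,
      |h00 (X ω)| ≤ M / ε / ε ∧
      |hpf (X ω)| ≤ M / ε / ε * (M + M) ∧
      |ha (X ω)| ≤ M * (M / ε) / ε ∧
      |hA2 (X ω)| ≤ M * (M / ε) / ε * (M + M) ∧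
      |hb (X ω)| ≤ M * (M / ε) * (M / ε) / ε ∧
      |hB2 (X ω)| ≤ M * (M / ε) * (M / ε) / ε * (M + M) ∧
      |k2 (X ω)| ≤ M * (M / ε) * ((M + M) + M / ε * (M + M)) ∧
      |k3 (X ω)| ≤ 1 / ε * (M * (M / ε) * ((M + M) + M / ε * (M + M))) ∧
      |n11 (X ω) / n10 (X ω) * n00 (X ω)| ≤ M / ε * M ∧
      |μ11 (X ω) / μ10 (X ω) * μ00 (X ω)| ≤ M / ε * M ∧
      |Y ω| ≤ M ∧ |n00 (X ω)| ≤ M ∧ |n11 (X ω)| ≤ M ∧ |n10 (X ω)| ≤ M ∧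
      |μ00 (X ω)| ≤ M ∧ |μ11 (X ω)| ≤ M ∧ |μ10 (X ω)| ≤ M ∧
      |q (X ω)| ≤ 1 ∧ |1 - q (X ω)| ≤ 1 ∧ |g (X ω)| ≤ 1 ∧ |1 - g (X ω)| ≤ 1 := by
    filter_upwards [hbd, hnbd] with ω h1 h2
    obtain ⟨g1, g2, q1, q2, l10, m11u, m10u, m00u, Yu, tauu⟩ := h1
    obtain ⟨ln10, un11, un10, un00, t0, t1'⟩ := h2
    have pa : ε ≤ |p (X ω)| := le_trans (hp (X ω)).1 (le_abs_self _)
    have qa : ε ≤ |q (X ω)| := le_trans q1 (le_abs_self _)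
    have q1a : ε ≤ |1 - q (X ω)| := le_trans (by linarith) (le_abs_self _)
    have ga : ε ≤ |g (X ω)| := le_trans g1 (le_abs_self _)
    have g1a : ε ≤ |1 - g (X ω)| := le_trans (by linarith) (le_abs_self _)
    have ta : |t (X ω)| ≤ M := abs_le.mpr ⟨by linarith, t1'⟩
    have qb : |q (X ω)| ≤ 1 := abs_le.mpr ⟨by linarith, by linarith⟩
    have q1b : |1 - q (X ω)| ≤ 1 := abs_le.mpr ⟨by linarith, by linarith⟩
    have gb : |g (X ω)| ≤ 1 := abs_le.mpr ⟨by linarith, by linarith⟩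
    have g1b : |1 - g (X ω)| ≤ 1 := abs_le.mpr ⟨by linarith, by linarith⟩
    have b1 : |h00 (X ω)| ≤ M / ε / ε := by
      simp only [h00def]; exact db hε0 (db hε0 un11 ln10) pa
    have b2 : |hpf (X ω)| ≤ M / ε / ε * (M + M) := by
      simp only [hpfdef]; exact pb b1 (sb m00u un00)
    have b3 : |ha (X ω)| ≤ M * (M / ε) / ε := by
      simp only [hadef]; exact db hε0 (pb ta (db hε0 un00 ln10)) qa
    have b4 : |hA2 (X ω)| ≤ M * (M / ε) / ε * (M + M) := by
      simp only [hA2def]; exact pb b3 (sb m11u un11)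
    have b5 : |hb (X ω)| ≤ M * (M / ε) * (M / ε) / ε := by
      simp only [hbdef]; exact db hε0 (pb (pb ta (db hε0 un00 ln10)) (db hε0 un11 ln10)) q1a
    have b6 : |hB2 (X ω)| ≤ M * (M / ε) * (M / ε) / ε * (M + M) := by
      simp only [hB2def]; exact pb b5 (sb m10u un10)
    have b7 : |k2 (X ω)| ≤ M * (M / ε) * ((M + M) + M / ε * (M + M)) := by
      simp only [k2def]
      exact pb (pb ta (db hε0 un00 ln10))
        (sb (sb m11u un11) (pb (db hε0 un11 ln10) (sb m10u un10)))
    have b8 : |k3 (X ω)| ≤ 1 / ε * (M * (M / ε) * ((M + M) + M / ε * (M + M))) := by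
      simp only [k3def]; exact pb (db hε0 gb g1a) b7
    have b9 : |n11 (X ω) / n10 (X ω) * n00 (X ω)| ≤ M / ε * M :=
      pb (db hε0 un11 ln10) un00
    have b10 : |μ11 (X ω) / μ10 (X ω) * μ00 (X ω)| ≤ M / ε * M :=
      pb (db hε0 m11u l10) m00u
    exact ⟨b1, b2, b3, b4, b5, b6, b7, b8, b9, b10, Yu, un00, un11, un10, m00u, m11u, m10u,
      qb, q1b, gb, g1b⟩
  have AE2 : ∀ᵐ ω ∂P, μ10 (X ω) ≠ 0 ∧ n10 (X ω) ≠ 0 ∧ q (X ω) ≠ 0 ∧ (1 : ℝ) - q (X ω) ≠ 0 ∧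
      g (X ω) ≠ 0 ∧ (1 : ℝ) - g (X ω) ≠ 0 := by
    filter_upwards [hbd, hnbd] with ω h1 h2
    obtain ⟨g1, g2, q1, q2, l10, _, _, _, _, _⟩ := h1
    obtain ⟨ln10, _, _, _, _, _⟩ := h2
    exact ⟨abs_pos.mp (lt_of_lt_of_le hε0 l10), abs_pos.mp (lt_of_lt_of_le hε0 ln10),
      (lt_of_lt_of_le hε0 q1).ne', (by linarith : (0:ℝ) < 1 - q (X ω)).ne',
      (lt_of_lt_of_le hε0 g1).ne', (by linarith : (0:ℝ) < 1 - g (X ω)).ne'⟩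
  -- integrability facts
  have iJ1 : Integrable (fun ω => (1 - S ω) * (n11 (X ω) / n10 (X ω) * n00 (X ω))) P := by
    exact intbdd (Measurable.aestronglyMeasurable
        ((measurable_const.sub hS).mul
        (((hmn11.comp hX).div (hmn10.comp hX)).mul (hmn00.comp hX))))
      (by
        filter_upwards [AE1] with ω h
        exact pb (hA1 ω).2.1 h.2.2.2.2.2.2.2.2.1)
  have iG1 : Integrable (fun ω => n11 (X ω) / n10 (X ω) * n00 (X ω)) P := by
    exact intbdd (Measurable.aestronglyMeasurable
        (((hmn11.comp hX).div (hmn10.comp hX)).mul (hmn00.comp hX)))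
      (by
        exact AE1.mono fun ω h => h.2.2.2.2.2.2.2.2.1)
  have iJ2 : Integrable
      (fun ω => (1 - S ω) * ((1 - A ω) * (h00 (X ω) * (Y ω - n00 (X ω))))) P := by
    exact intbdd (Measurable.aestronglyMeasurable
        ((measurable_const.sub hS).mul ((measurable_const.sub hA).mul
        ((mh00.comp hX).mul (hY.sub (hmn00.comp hX))))))
      (by
        filter_upwards [AE1] with ω h
        obtain ⟨b1, _, _, _, _, _, _, _, _, _, b11, b12, _⟩ := h
        exact pb (hA1 ω).2.1 (pb (hA1 ω).2.2.2 (pb b1 (sb b11 b12))))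
  have iJ3 : Integrable (fun ω => S ω * (A ω * (ha (X ω) * (Y ω - n11 (X ω))))) P := by
    exact intbdd (Measurable.aestronglyMeasurable
        (hS.mul (hA.mul ((mha.comp hX).mul (hY.sub (hmn11.comp hX))))))
      (by
        filter_upwards [AE1] with ω h
        obtain ⟨_, _, b3, _, _, _, _, _, _, _, b11, _, b13, _⟩ := h
        exact pb (hA1 ω).1 (pb (hA1 ω).2.2.1 (pb b3 (sb b11 b13))))
  have iJ4 : Integrable (fun ω => S ω * ((1 - A ω) * (hb (X ω) * (Y ω - n10 (X ω))))) P := by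
    exact intbdd (Measurable.aestronglyMeasurable
        (hS.mul ((measurable_const.sub hA).mul
        ((mhb.comp hX).mul (hY.sub (hmn10.comp hX))))))
      (by
        filter_upwards [AE1] with ω h
        obtain ⟨_, _, _, _, b5, _, _, _, _, _, b11, _, _, b14, _⟩ := h
        exact pb (hA1 ω).1 (pb (hA1 ω).2.2.2 (pb b5 (sb b11 b14))))
  have iYh00 : Integrable (fun ω => Y ω * h00 (X ω)) P := by
    exact intbdd (Measurable.aestronglyMeasurable (hY.mul (mh00.comp hX)))
      (by
        filter_upwards [AE1] with ω h
        exact pb h.2.2.2.2.2.2.2.2.2.2.1 h.1)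
  have in00h00 : Integrable (fun ω => n00 (X ω) * h00 (X ω)) P := by
    exact intbdd (Measurable.aestronglyMeasurable ((hmn00.comp hX).mul (mh00.comp hX)))
      (by
        filter_upwards [AE1] with ω h
        exact pb h.2.2.2.2.2.2.2.2.2.2.2.1 h.1)
  have iμ00h00 : Integrable (fun ω => μ00 (X ω) * h00 (X ω)) P := by
    exact intbdd (Measurable.aestronglyMeasurable ((hμ00.1.comp hX).mul (mh00.comp hX)))
      (by
        filter_upwards [AE1] with ω h
        exact pb h.2.2.2.2.2.2.2.2.2.2.2.2.2.2.1 h.1)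
  have iYha : Integrable (fun ω => Y ω * ha (X ω)) P := by
    exact intbdd (Measurable.aestronglyMeasurable (hY.mul (mha.comp hX)))
      (by
        filter_upwards [AE1] with ω h
        exact pb h.2.2.2.2.2.2.2.2.2.2.1 h.2.2.1)
  have in11ha : Integrable (fun ω => n11 (X ω) * ha (X ω)) P := by
    exact intbdd (Measurable.aestronglyMeasurable ((hmn11.comp hX).mul (mha.comp hX)))
      (by
        filter_upwards [AE1] with ω h
        exact pb h.2.2.2.2.2.2.2.2.2.2.2.2.1 h.2.2.1)
  have iμ11ha : Integrable (fun ω => μ11 (X ω) * ha (X ω)) P := by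
    exact intbdd (Measurable.aestronglyMeasurable ((hμ11.1.comp hX).mul (mha.comp hX)))
      (by
        filter_upwards [AE1] with ω h
        exact pb h.2.2.2.2.2.2.2.2.2.2.2.2.2.2.2.1 h.2.2.1)
  have iYhb : Integrable (fun ω => Y ω * hb (X ω)) P := by
    exact intbdd (Measurable.aestronglyMeasurable (hY.mul (mhb.comp hX)))
      (by
        filter_upwards [AE1] with ω h
        exact pb h.2.2.2.2.2.2.2.2.2.2.1 h.2.2.2.2.1)
  have in10hb : Integrable (fun ω => n10 (X ω) * hb (X ω)) P := by
    exact intbdd (Measurable.aestronglyMeasurable ((hmn10.comp hX).mul (mhb.comp hX)))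
      (by
        filter_upwards [AE1] with ω h
        exact pb h.2.2.2.2.2.2.2.2.2.2.2.2.2.1 h.2.2.2.2.1)
  have iμ10hb : Integrable (fun ω => μ10 (X ω) * hb (X ω)) P := by
    exact intbdd (Measurable.aestronglyMeasurable ((hμ10.1.comp hX).mul (mhb.comp hX)))
      (by
        filter_upwards [AE1] with ω h
        exact pb h.2.2.2.2.2.2.2.2.2.2.2.2.2.2.2.2.1 h.2.2.2.2.1)
  have ihA2 : Integrable (fun ω => hA2 (X ω)) P :=
    intbdd (Measurable.aestronglyMeasurable (mhA2.comp hX)) (AE1.mono fun ω h => h.2.2.2.1)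
  have iqhA2 : Integrable (fun ω => q (X ω) * hA2 (X ω)) P := by
    exact intbdd (Measurable.aestronglyMeasurable ((hq.1.comp hX).mul (mhA2.comp hX)))
      (by
        filter_upwards [AE1] with ω h
        exact pb h.2.2.2.2.2.2.2.2.2.2.2.2.2.2.2.2.2.1 h.2.2.2.1)
  have ihB2 : Integrable (fun ω => hB2 (X ω)) P :=
    intbdd (Measurable.aestronglyMeasurable (mhB2.comp hX)) (AE1.mono fun ω h => h.2.2.2.2.2.1)
  have iAhB2 : Integrable (fun ω => A ω * hB2 (X ω)) P := by
    exact intbdd (Measurable.aestronglyMeasurable (hA.mul (mhB2.comp hX)))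
      (by
        filter_upwards [AE1] with ω h
        exact pb (hA1 ω).2.2.1 h.2.2.2.2.2.1)
  have iqhB2 : Integrable (fun ω => q (X ω) * hB2 (X ω)) P := by
    exact intbdd (Measurable.aestronglyMeasurable ((hq.1.comp hX).mul (mhB2.comp hX)))
      (by
        filter_upwards [AE1] with ω h
        exact pb h.2.2.2.2.2.2.2.2.2.2.2.2.2.2.2.2.2.1 h.2.2.2.2.2.1)
  have i1qhB2 : Integrable (fun ω => (1 - q (X ω)) * hB2 (X ω)) P := by
    exact intbdd (Measurable.aestronglyMeasurable
        ((measurable_const.sub (hq.1.comp hX)).mul (mhB2.comp hX)))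
      (by
        filter_upwards [AE1] with ω h
        exact pb h.2.2.2.2.2.2.2.2.2.2.2.2.2.2.2.2.2.2.1 h.2.2.2.2.2.1)
  have ik2 : Integrable (fun ω => k2 (X ω)) P :=
    intbdd (Measurable.aestronglyMeasurable (mk2.comp hX)) (AE1.mono fun ω h => h.2.2.2.2.2.2.1)
  have iSk2 : Integrable (fun ω => S ω * k2 (X ω)) P := by
    exact intbdd (Measurable.aestronglyMeasurable (hS.mul (mk2.comp hX)))
      (by
        filter_upwards [AE1] with ω h
        exact pb (hA1 ω).1 h.2.2.2.2.2.2.1)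
  have igk2 : Integrable (fun ω => g (X ω) * k2 (X ω)) P := by
    exact intbdd (Measurable.aestronglyMeasurable ((hg.1.comp hX).mul (mk2.comp hX)))
      (by
        filter_upwards [AE1] with ω h
        exact pb h.2.2.2.2.2.2.2.2.2.2.2.2.2.2.2.2.2.2.2.1 h.2.2.2.2.2.2.1)
  have ik3 : Integrable (fun ω => k3 (X ω)) P :=
    intbdd (Measurable.aestronglyMeasurable (mk3.comp hX)) (AE1.mono fun ω h => h.2.2.2.2.2.2.2.1)
  have igk3 : Integrable (fun ω => g (X ω) * k3 (X ω)) P := by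
    exact intbdd (Measurable.aestronglyMeasurable ((hg.1.comp hX).mul (mk3.comp hX)))
      (by
        filter_upwards [AE1] with ω h
        exact pb h.2.2.2.2.2.2.2.2.2.2.2.2.2.2.2.2.2.2.2.1 h.2.2.2.2.2.2.2.1)
  have iSk3 : Integrable (fun ω => S ω * k3 (X ω)) P := by
    exact intbdd (Measurable.aestronglyMeasurable (hS.mul (mk3.comp hX)))
      (by
        filter_upwards [AE1] with ω h
        exact pb (hA1 ω).1 h.2.2.2.2.2.2.2.1)
  have ifα : Integrable (fun ω => μ11 (X ω) / μ10 (X ω) * μ00 (X ω)) P := by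
    exact intbdd (Measurable.aestronglyMeasurable
        (((hμ11.1.comp hX).div (hμ10.1.comp hX)).mul (hμ00.1.comp hX)))
      (AE1.mono fun ω h => h.2.2.2.2.2.2.2.2.2.1)
  have iπ : Integrable (fun ω => π (X ω) * hpf (X ω)) (P.restrict {ω | S ω = 0}) := by
    exact intbdd (Measurable.aestronglyMeasurable ((hπ.1.comp hX).mul (mhpf.comp hX)))
      (by
        filter_upwards [ae_restrict_of_ae AE1, (ae_restrict_iff' mS0).2 hπbd] with ω h hπω
        have hb1 : |π (X ω)| ≤ 1 := abs_le.mpr ⟨by linarith [hπω.1, hε0.le], by linarith [hπω.2]⟩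
        exact pb hb1 h.2.1)
  -- branch 1 : the (1-S) observational term
  have s1 : ∫ ω, (1 - S ω) * ((1 - A ω) * (h00 (X ω) * (Y ω - n00 (X ω)))) ∂P
      = ∫ ω in {ω | S ω = 0}, (1 - A ω) * (h00 (X ω) * (Y ω - n00 (X ω))) ∂P := by
    have h := setIntegral_chi_mul P mS0 chiS0 Set.univ
      (fun ω => (1 - A ω) * (h00 (X ω) * (Y ω - n00 (X ω))))
    rw [Set.univ_inter, setIntegral_univ] at h
    exact h
  have s2 : ∫ ω in {ω | S ω = 0}, (1 - A ω) * (h00 (X ω) * (Y ω - n00 (X ω))) ∂P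
      = ∫ ω in {ω | S ω = 0 ∧ A ω = 0}, h00 (X ω) * (Y ω - n00 (X ω)) ∂P :=
    setIntegral_chi_mul P mA0 chiA0 {ω | S ω = 0}
      (fun ω => h00 (X ω) * (Y ω - n00 (X ω)))
  have vμ00 : ∫ ω in {ω | S ω = 0 ∧ A ω = 0}, Y ω * h00 (X ω) ∂P
      = ∫ ω in {ω | S ω = 0 ∧ A ω = 0}, μ00 (X ω) * h00 (X ω) ∂P :=
    isVersion_ae_bdd hμ00 h00 mh00 (AE1.mono fun ω h => h.1)
  have s3 : ∫ ω in {ω | S ω = 0 ∧ A ω = 0}, h00 (X ω) * (Y ω - n00 (X ω)) ∂P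
      = ∫ ω in {ω | S ω = 0 ∧ A ω = 0}, hpf (X ω) ∂P := by
    calc ∫ ω in {ω | S ω = 0 ∧ A ω = 0}, h00 (X ω) * (Y ω - n00 (X ω)) ∂P
        = ∫ ω in {ω | S ω = 0 ∧ A ω = 0}, (Y ω * h00 (X ω) - n00 (X ω) * h00 (X ω)) ∂P :=
          integral_congr_ae (Filter.Eventually.of_forall fun ω => by ring)
      _ = (∫ ω in {ω | S ω = 0 ∧ A ω = 0}, Y ω * h00 (X ω) ∂P)
          - ∫ ω in {ω | S ω = 0 ∧ A ω = 0}, n00 (X ω) * h00 (X ω) ∂P :=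
          integral_sub (iYh00.restrict) (in00h00.restrict)
      _ = (∫ ω in {ω | S ω = 0 ∧ A ω = 0}, μ00 (X ω) * h00 (X ω) ∂P)
          - ∫ ω in {ω | S ω = 0 ∧ A ω = 0}, n00 (X ω) * h00 (X ω) ∂P := by rw [vμ00]
      _ = ∫ ω in {ω | S ω = 0 ∧ A ω = 0}, (μ00 (X ω) * h00 (X ω) - n00 (X ω) * h00 (X ω)) ∂P :=
          (integral_sub (iμ00h00.restrict) (in00h00.restrict)).symm
      _ = ∫ ω in {ω | S ω = 0 ∧ A ω = 0}, hpf (X ω) ∂P :=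
          integral_congr_ae (Filter.Eventually.of_forall fun ω => by
            simp only [hpfdef]; ring)
  have s4 : ∫ ω in {ω | S ω = 0 ∧ A ω = 0}, hpf (X ω) ∂P
      = ∫ ω in {ω | S ω = 0}, (1 - A ω) * hpf (X ω) ∂P :=
    (setIntegral_chi_mul P mA0 chiA0 {ω | S ω = 0} (fun ω => hpf (X ω))).symm
  have s5 : ∫ ω in {ω | S ω = 0}, (1 - A ω) * hpf (X ω) ∂P
      = ∫ ω in {ω | S ω = 0}, π (X ω) * hpf (X ω) ∂P :=
    isVersion_ae_bdd hπ hpf mhpf (AE1.mono fun ω h => h.2.1)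
  have J2chain : ∫ ω, (1 - S ω) * ((1 - A ω) * (h00 (X ω) * (Y ω - n00 (X ω)))) ∂P
      = ∫ ω in {ω | S ω = 0}, π (X ω) * hpf (X ω) ∂P :=
    s1.trans (s2.trans (s3.trans (s4.trans s5)))
  -- branch 2 : the S * A term
  have t1 : ∫ ω, S ω * (A ω * (ha (X ω) * (Y ω - n11 (X ω)))) ∂P
      = ∫ ω in {ω | S ω = 1}, A ω * (ha (X ω) * (Y ω - n11 (X ω))) ∂P := by
    have h := setIntegral_chi_mul P mS1 chiS1 Set.univ
      (fun ω => A ω * (ha (X ω) * (Y ω - n11 (X ω))))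
    rw [Set.univ_inter, setIntegral_univ] at h
    exact h
  have t2 : ∫ ω in {ω | S ω = 1}, A ω * (ha (X ω) * (Y ω - n11 (X ω))) ∂P
      = ∫ ω in {ω | S ω = 1 ∧ A ω = 1}, ha (X ω) * (Y ω - n11 (X ω)) ∂P :=
    setIntegral_chi_mul P mA1 chiA1 {ω | S ω = 1} (fun ω => ha (X ω) * (Y ω - n11 (X ω)))
  have vμ11 : ∫ ω in {ω | S ω = 1 ∧ A ω = 1}, Y ω * ha (X ω) ∂P
      = ∫ ω in {ω | S ω = 1 ∧ A ω = 1}, μ11 (X ω) * ha (X ω) ∂P :=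
    isVersion_ae_bdd hμ11 ha mha (AE1.mono fun ω h => h.2.2.1)
  have t3 : ∫ ω in {ω | S ω = 1 ∧ A ω = 1}, ha (X ω) * (Y ω - n11 (X ω)) ∂P
      = ∫ ω in {ω | S ω = 1 ∧ A ω = 1}, hA2 (X ω) ∂P := by
    calc ∫ ω in {ω | S ω = 1 ∧ A ω = 1}, ha (X ω) * (Y ω - n11 (X ω)) ∂P
        = ∫ ω in {ω | S ω = 1 ∧ A ω = 1}, (Y ω * ha (X ω) - n11 (X ω) * ha (X ω)) ∂P :=
          integral_congr_ae (Filter.Eventually.of_forall fun ω => by ring)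
      _ = (∫ ω in {ω | S ω = 1 ∧ A ω = 1}, Y ω * ha (X ω) ∂P)
          - ∫ ω in {ω | S ω = 1 ∧ A ω = 1}, n11 (X ω) * ha (X ω) ∂P :=
          integral_sub (iYha.restrict) (in11ha.restrict)
      _ = (∫ ω in {ω | S ω = 1 ∧ A ω = 1}, μ11 (X ω) * ha (X ω) ∂P)
          - ∫ ω in {ω | S ω = 1 ∧ A ω = 1}, n11 (X ω) * ha (X ω) ∂P := by rw [vμ11]
      _ = ∫ ω in {ω | S ω = 1 ∧ A ω = 1}, (μ11 (X ω) * ha (X ω) - n11 (X ω) * ha (X ω)) ∂P :=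
          (integral_sub (iμ11ha.restrict) (in11ha.restrict)).symm
      _ = ∫ ω in {ω | S ω = 1 ∧ A ω = 1}, hA2 (X ω) ∂P :=
          integral_congr_ae (Filter.Eventually.of_forall fun ω => by
            simp only [hA2def]; ring)
  have t4 : ∫ ω in {ω | S ω = 1 ∧ A ω = 1}, hA2 (X ω) ∂P
      = ∫ ω in {ω | S ω = 1}, A ω * hA2 (X ω) ∂P :=
    (setIntegral_chi_mul P mA1 chiA1 {ω | S ω = 1} (fun ω => hA2 (X ω))).symm
  have t5 : ∫ ω in {ω | S ω = 1}, A ω * hA2 (X ω) ∂P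
      = ∫ ω in {ω | S ω = 1}, q (X ω) * hA2 (X ω) ∂P :=
    isVersion_ae_bdd hq hA2 mhA2 (AE1.mono fun ω h => h.2.2.2.1)
  have J3chain : ∫ ω, S ω * (A ω * (ha (X ω) * (Y ω - n11 (X ω)))) ∂P
      = ∫ ω in {ω | S ω = 1}, q (X ω) * hA2 (X ω) ∂P :=
    t1.trans (t2.trans (t3.trans (t4.trans t5)))
  -- branch 3 : the S * (1-A) term
  have u1 : ∫ ω, S ω * ((1 - A ω) * (hb (X ω) * (Y ω - n10 (X ω)))) ∂P
      = ∫ ω in {ω | S ω = 1}, (1 - A ω) * (hb (X ω) * (Y ω - n10 (X ω))) ∂P := by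
    have h := setIntegral_chi_mul P mS1 chiS1 Set.univ
      (fun ω => (1 - A ω) * (hb (X ω) * (Y ω - n10 (X ω))))
    rw [Set.univ_inter, setIntegral_univ] at h
    exact h
  have u2 : ∫ ω in {ω | S ω = 1}, (1 - A ω) * (hb (X ω) * (Y ω - n10 (X ω))) ∂P
      = ∫ ω in {ω | S ω = 1 ∧ A ω = 0}, hb (X ω) * (Y ω - n10 (X ω)) ∂P :=
    setIntegral_chi_mul P mA0 chiA0 {ω | S ω = 1} (fun ω => hb (X ω) * (Y ω - n10 (X ω)))
  have vμ10 : ∫ ω in {ω | S ω = 1 ∧ A ω = 0}, Y ω * hb (X ω) ∂P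
      = ∫ ω in {ω | S ω = 1 ∧ A ω = 0}, μ10 (X ω) * hb (X ω) ∂P :=
    isVersion_ae_bdd hμ10 hb mhb (AE1.mono fun ω h => h.2.2.2.2.1)
  have u3 : ∫ ω in {ω | S ω = 1 ∧ A ω = 0}, hb (X ω) * (Y ω - n10 (X ω)) ∂P
      = ∫ ω in {ω | S ω = 1 ∧ A ω = 0}, hB2 (X ω) ∂P := by
    calc ∫ ω in {ω | S ω = 1 ∧ A ω = 0}, hb (X ω) * (Y ω - n10 (X ω)) ∂P
        = ∫ ω in {ω | S ω = 1 ∧ A ω = 0}, (Y ω * hb (X ω) - n10 (X ω) * hb (X ω)) ∂P :=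
          integral_congr_ae (Filter.Eventually.of_forall fun ω => by ring)
      _ = (∫ ω in {ω | S ω = 1 ∧ A ω = 0}, Y ω * hb (X ω) ∂P)
          - ∫ ω in {ω | S ω = 1 ∧ A ω = 0}, n10 (X ω) * hb (X ω) ∂P :=
          integral_sub (iYhb.restrict) (in10hb.restrict)
      _ = (∫ ω in {ω | S ω = 1 ∧ A ω = 0}, μ10 (X ω) * hb (X ω) ∂P)
          - ∫ ω in {ω | S ω = 1 ∧ A ω = 0}, n10 (X ω) * hb (X ω) ∂P := by rw [vμ10]
      _ = ∫ ω in {ω | S ω = 1 ∧ A ω = 0}, (μ10 (X ω) * hb (X ω) - n10 (X ω) * hb (X ω)) ∂P :=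
          (integral_sub (iμ10hb.restrict) (in10hb.restrict)).symm
      _ = ∫ ω in {ω | S ω = 1 ∧ A ω = 0}, hB2 (X ω) ∂P :=
          integral_congr_ae (Filter.Eventually.of_forall fun ω => by
            simp only [hB2def]; ring)
  have u4 : ∫ ω in {ω | S ω = 1 ∧ A ω = 0}, hB2 (X ω) ∂P
      = ∫ ω in {ω | S ω = 1}, (1 - A ω) * hB2 (X ω) ∂P :=
    (setIntegral_chi_mul P mA0 chiA0 {ω | S ω = 1} (fun ω => hB2 (X ω))).symm
  have u6 : ∫ ω in {ω | S ω = 1}, A ω * hB2 (X ω) ∂P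
      = ∫ ω in {ω | S ω = 1}, q (X ω) * hB2 (X ω) ∂P :=
    isVersion_ae_bdd hq hB2 mhB2 (AE1.mono fun ω h => h.2.2.2.2.2.1)
  have J4chain : ∫ ω, S ω * ((1 - A ω) * (hb (X ω) * (Y ω - n10 (X ω)))) ∂P
      = ∫ ω in {ω | S ω = 1}, (1 - q (X ω)) * hB2 (X ω) ∂P := by
    calc ∫ ω, S ω * ((1 - A ω) * (hb (X ω) * (Y ω - n10 (X ω)))) ∂P
        = ∫ ω in {ω | S ω = 1}, (1 - A ω) * hB2 (X ω) ∂P :=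
          u1.trans (u2.trans (u3.trans u4))
      _ = ∫ ω in {ω | S ω = 1}, (hB2 (X ω) - A ω * hB2 (X ω)) ∂P :=
          integral_congr_ae (Filter.Eventually.of_forall fun ω => by ring)
      _ = (∫ ω in {ω | S ω = 1}, hB2 (X ω) ∂P) - ∫ ω in {ω | S ω = 1}, A ω * hB2 (X ω) ∂P :=
          integral_sub (ihB2.restrict) (iAhB2.restrict)
      _ = (∫ ω in {ω | S ω = 1}, hB2 (X ω) ∂P)
          - ∫ ω in {ω | S ω = 1}, q (X ω) * hB2 (X ω) ∂P := by rw [u6]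
      _ = ∫ ω in {ω | S ω = 1}, (hB2 (X ω) - q (X ω) * hB2 (X ω)) ∂P :=
          (integral_sub (ihB2.restrict) (iqhB2.restrict)).symm
      _ = ∫ ω in {ω | S ω = 1}, (1 - q (X ω)) * hB2 (X ω) ∂P :=
          integral_congr_ae (Filter.Eventually.of_forall fun ω => by ring)
  -- combine branch 2 and 3, transfer to {S = 0}
  have w1 : (∫ ω in {ω | S ω = 1}, q (X ω) * hA2 (X ω) ∂P)
      - ∫ ω in {ω | S ω = 1}, (1 - q (X ω)) * hB2 (X ω) ∂P
      = ∫ ω in {ω | S ω = 1}, k2 (X ω) ∂P := by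
    rw [← integral_sub (iqhA2.restrict) (i1qhB2.restrict)]
    refine integral_congr_ae (ae_restrict_of_ae ?_)
    filter_upwards [AE2] with ω h2
    obtain ⟨hμ10ne, hn10ne, hqne, h1qne, hgne, h1gne⟩ := h2
    simp only [hA2def, hadef, hB2def, hbdef, k2def]
    field_simp
  have w2 : ∫ ω in {ω | S ω = 1}, k2 (X ω) ∂P = ∫ ω, S ω * k2 (X ω) ∂P := by
    have h := setIntegral_chi_mul P mS1 chiS1 Set.univ (fun ω => k2 (X ω))
    rw [Set.univ_inter, setIntegral_univ] at h
    exact h.symm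
  have w3 : ∫ ω, S ω * k2 (X ω) ∂P = ∫ ω, g (X ω) * k2 (X ω) ∂P := by
    have h := isVersion_ae_bdd hg k2 mk2 (AE1.mono fun ω h => h.2.2.2.2.2.2.1)
    rw [setIntegral_univ, setIntegral_univ] at h
    exact h
  have w4 : ∫ ω, g (X ω) * k2 (X ω) ∂P = ∫ ω, (1 - g (X ω)) * k3 (X ω) ∂P := by
    refine integral_congr_ae ?_
    filter_upwards [AE2] with ω h2
    obtain ⟨hμ10ne, hn10ne, hqne, h1qne, hgne, h1gne⟩ := h2
    simp only [k3def]
    field_simp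
  have w5 : ∫ ω, (1 - g (X ω)) * k3 (X ω) ∂P
      = (∫ ω, k3 (X ω) ∂P) - ∫ ω, g (X ω) * k3 (X ω) ∂P := by
    rw [← integral_sub ik3 igk3]
    exact integral_congr_ae (Filter.Eventually.of_forall fun ω => by ring)
  have w6 : ∫ ω, g (X ω) * k3 (X ω) ∂P = ∫ ω, S ω * k3 (X ω) ∂P := by
    have h := isVersion_ae_bdd hg k3 mk3 (AE1.mono fun ω h => h.2.2.2.2.2.2.2.1)
    rw [setIntegral_univ, setIntegral_univ] at h
    exact h.symm
  have w7 : (∫ ω, k3 (X ω) ∂P) - ∫ ω, S ω * k3 (X ω) ∂P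
      = ∫ ω, (1 - S ω) * k3 (X ω) ∂P := by
    rw [← integral_sub ik3 iSk3]
    exact integral_congr_ae (Filter.Eventually.of_forall fun ω => by ring)
  have w8 : ∫ ω, (1 - S ω) * k3 (X ω) ∂P = ∫ ω in {ω | S ω = 0}, k3 (X ω) ∂P := by
    have h := setIntegral_chi_mul P mS0 chiS0 Set.univ (fun ω => k3 (X ω))
    rw [Set.univ_inter, setIntegral_univ] at h
    exact h
  have Kchain : (∫ ω, S ω * (A ω * (ha (X ω) * (Y ω - n11 (X ω)))) ∂P)
      - ∫ ω, S ω * ((1 - A ω) * (hb (X ω) * (Y ω - n10 (X ω)))) ∂P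
      = ∫ ω in {ω | S ω = 0}, k3 (X ω) ∂P := by
    rw [J3chain, J4chain, w1, w2, w3, w4, w5, w6, w7, w8]
  -- branch 0 : the (1-S) * direct term
  have J1chain : ∫ ω, (1 - S ω) * (n11 (X ω) / n10 (X ω) * n00 (X ω)) ∂P
      = ∫ ω in {ω | S ω = 0}, n11 (X ω) / n10 (X ω) * n00 (X ω) ∂P := by
    have h := setIntegral_chi_mul P mS0 chiS0 Set.univ
      (fun ω => n11 (X ω) / n10 (X ω) * n00 (X ω))
    rw [Set.univ_inter, setIntegral_univ] at h
    exact h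
  -- the pointwise algebraic identity on {S = 0}
  have haeid : ∀ᵐ ω ∂(P.restrict {ω | S ω = 0}),
      n11 (X ω) / n10 (X ω) * n00 (X ω) + (π (X ω) * hpf (X ω) + k3 (X ω))
      = μ11 (X ω) / μ10 (X ω) * μ00 (X ω) +
        ((n11 (X ω) / n10 (X ω) - μ11 (X ω) / μ10 (X ω)) *
            (μ00 (X ω) -
              t (X ω) / ((1 - g (X ω)) / g (X ω)) * (n00 (X ω) / n10 (X ω)) * μ10 (X ω)) +
          n11 (X ω) / n10 (X ω) * (1 - π (X ω) / p (X ω)) * (n00 (X ω) - μ00 (X ω))) := by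
    refine ae_restrict_of_ae ?_
    filter_upwards [AE2] with ω h2
    obtain ⟨hμ10ne, hn10ne, hqne, h1qne, hgne, h1gne⟩ := h2
    have hpne : p (X ω) ≠ 0 := (lt_of_lt_of_le hε0 (hp (X ω)).1).ne'
    have hτne : (1 - g (X ω)) / g (X ω) ≠ 0 := div_ne_zero h1gne hgne
    simp only [hpfdef, h00def, k3def, k2def]
    field_simp
    ring
  have hGR : Integrable (fun ω =>
      n11 (X ω) / n10 (X ω) * n00 (X ω) + (π (X ω) * hpf (X ω) + k3 (X ω)))
      (P.restrict {ω | S ω = 0}) :=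
    (iG1.restrict).add (iπ.add (ik3.restrict))
  have hfaRint : Integrable (fun ω =>
      μ11 (X ω) / μ10 (X ω) * μ00 (X ω) +
        ((n11 (X ω) / n10 (X ω) - μ11 (X ω) / μ10 (X ω)) *
            (μ00 (X ω) -
              t (X ω) / ((1 - g (X ω)) / g (X ω)) * (n00 (X ω) / n10 (X ω)) * μ10 (X ω)) +
          n11 (X ω) / n10 (X ω) * (1 - π (X ω) / p (X ω)) * (n00 (X ω) - μ00 (X ω))))
      (P.restrict {ω | S ω = 0}) := hGR.congr haeid
  have hfRint : Integrable (fun ω =>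
      (n11 (X ω) / n10 (X ω) - μ11 (X ω) / μ10 (X ω)) *
          (μ00 (X ω) -
            t (X ω) / ((1 - g (X ω)) / g (X ω)) * (n00 (X ω) / n10 (X ω)) * μ10 (X ω)) +
        n11 (X ω) / n10 (X ω) * (1 - π (X ω) / p (X ω)) * (n00 (X ω) - μ00 (X ω)))
      (P.restrict {ω | S ω = 0}) :=
    (hfaRint.sub (ifα.restrict)).congr
      (Filter.Eventually.of_forall fun ω => by simp only [Pi.sub_apply]; ring)
  have i34 : Integrable (fun ω => S ω * (A ω * (ha (X ω) * (Y ω - n11 (X ω)))) -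
      S ω * ((1 - A ω) * (hb (X ω) * (Y ω - n10 (X ω))))) P := iJ3.sub iJ4
  have i234 : Integrable (fun ω => (1 - S ω) * ((1 - A ω) * (h00 (X ω) * (Y ω - n00 (X ω)))) +
      (S ω * (A ω * (ha (X ω) * (Y ω - n11 (X ω)))) -
        S ω * ((1 - A ω) * (hb (X ω) * (Y ω - n10 (X ω)))))) P := iJ2.add i34
  have iπk3 : Integrable (fun ω => π (X ω) * hpf (X ω) + k3 (X ω))
      (P.restrict {ω | S ω = 0}) := iπ.add ik3.restrict
  -- total computation of the integral of the body
  have hB : ∫ ω, ((1 - S ω) * (n11 (X ω) / n10 (X ω)) *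
        (n00 (X ω) + (1 - A ω) / p (X ω) * (Y ω - n00 (X ω))) +
      S ω * t (X ω) * (n00 (X ω) / n10 (X ω)) *
        (A ω / q (X ω) * (Y ω - n11 (X ω)) -
          (1 - A ω) / (1 - q (X ω)) * (n11 (X ω) / n10 (X ω)) * (Y ω - n10 (X ω)))) ∂P
      = (∫ ω in {ω | S ω = 0}, μ11 (X ω) / μ10 (X ω) * μ00 (X ω) ∂P) +
        ∫ ω in {ω | S ω = 0},
          ((n11 (X ω) / n10 (X ω) - μ11 (X ω) / μ10 (X ω)) *
              (μ00 (X ω) -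
                t (X ω) / ((1 - g (X ω)) / g (X ω)) * (n00 (X ω) / n10 (X ω)) * μ10 (X ω)) +
            n11 (X ω) / n10 (X ω) * (1 - π (X ω) / p (X ω)) * (n00 (X ω) - μ00 (X ω))) ∂P := by
    calc ∫ ω, ((1 - S ω) * (n11 (X ω) / n10 (X ω)) *
          (n00 (X ω) + (1 - A ω) / p (X ω) * (Y ω - n00 (X ω))) +
        S ω * t (X ω) * (n00 (X ω) / n10 (X ω)) *
          (A ω / q (X ω) * (Y ω - n11 (X ω)) -
            (1 - A ω) / (1 - q (X ω)) * (n11 (X ω) / n10 (X ω)) * (Y ω - n10 (X ω)))) ∂P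
        = ∫ ω, ((1 - S ω) * (n11 (X ω) / n10 (X ω) * n00 (X ω)) +
            ((1 - S ω) * ((1 - A ω) * (h00 (X ω) * (Y ω - n00 (X ω)))) +
              (S ω * (A ω * (ha (X ω) * (Y ω - n11 (X ω)))) -
                S ω * ((1 - A ω) * (hb (X ω) * (Y ω - n10 (X ω))))))) ∂P :=
          integral_congr_ae (Filter.Eventually.of_forall fun ω => by
            simp only [h00def, hadef, hbdef]; ring)
      _ = (∫ ω, (1 - S ω) * (n11 (X ω) / n10 (X ω) * n00 (X ω)) ∂P) +
          ((∫ ω, (1 - S ω) * ((1 - A ω) * (h00 (X ω) * (Y ω - n00 (X ω)))) ∂P) +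
            ((∫ ω, S ω * (A ω * (ha (X ω) * (Y ω - n11 (X ω)))) ∂P) -
              ∫ ω, S ω * ((1 - A ω) * (hb (X ω) * (Y ω - n10 (X ω)))) ∂P)) := by
          rw [integral_add iJ1 i234, integral_add iJ2 i34, integral_sub iJ3 iJ4]
      _ = (∫ ω in {ω | S ω = 0}, n11 (X ω) / n10 (X ω) * n00 (X ω) ∂P) +
          ((∫ ω in {ω | S ω = 0}, π (X ω) * hpf (X ω) ∂P) +
            ∫ ω in {ω | S ω = 0}, k3 (X ω) ∂P) := by
          rw [J1chain, J2chain, Kchain]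
      _ = ∫ ω in {ω | S ω = 0},
            (n11 (X ω) / n10 (X ω) * n00 (X ω) + (π (X ω) * hpf (X ω) + k3 (X ω))) ∂P := by
          rw [integral_add iG1.restrict iπk3, integral_add iπ ik3.restrict]
      _ = ∫ ω in {ω | S ω = 0},
            (μ11 (X ω) / μ10 (X ω) * μ00 (X ω) +
              ((n11 (X ω) / n10 (X ω) - μ11 (X ω) / μ10 (X ω)) *
                  (μ00 (X ω) -
                    t (X ω) / ((1 - g (X ω)) / g (X ω)) * (n00 (X ω) / n10 (X ω)) * μ10 (X ω)) +
                n11 (X ω) / n10 (X ω) * (1 - π (X ω) / p (X ω)) * (n00 (X ω) - μ00 (X ω)))) ∂P :=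
          integral_congr_ae haeid
      _ = (∫ ω in {ω | S ω = 0}, μ11 (X ω) / μ10 (X ω) * μ00 (X ω) ∂P) +
          ∫ ω in {ω | S ω = 0},
            ((n11 (X ω) / n10 (X ω) - μ11 (X ω) / μ10 (X ω)) *
                (μ00 (X ω) -
                  t (X ω) / ((1 - g (X ω)) / g (X ω)) * (n00 (X ω) / n10 (X ω)) * μ10 (X ω)) +
              n11 (X ω) / n10 (X ω) * (1 - π (X ω) / p (X ω)) * (n00 (X ω) - μ00 (X ω))) ∂P :=
          integral_add (ifα.restrict) hfRint
  have hcne : (P {ω | S ω = 0}).toReal ≠ 0 := hc.ne'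
  simp only [H2, condMean]
  rw [integral_const_mul, hB]
  field_simp
  ring
end

section
/- Characterization of L² ratio consistency (Section 2.4, equivalence of conditions (S.2) and (S.3)): n^{−a} · ‖fₙ/gₙ − f/g‖ → 0 as n → ∞ if and only if there exist measurable functions δₙ : E → ℝ with ε/C ≤ |δₙ| ≤ C/ε ν-a.e. for every n, such that n^{−a} · ( ‖fₙ − f·δₙ‖ + ‖gₙ − g·δₙ‖ ) → 0 as n → ∞. -/
open MeasureTheory Filter

/-- The `L²(ν)` norm `‖h‖ = (∫ h² dν)^{1/2}`. -/
noncomputable def norm2 {E : Type*} [MeasurableSpace E] (ν : Measure E) (h : E → ℝ) : ℝ :=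
  Real.sqrt (∫ x, (h x) ^ 2 ∂ν)

lemma norm2_nonneg {E : Type*} [MeasurableSpace E] (ν : Measure E) (h : E → ℝ) :
    0 ≤ norm2 ν h := Real.sqrt_nonneg _

lemma norm2_of_not_integrable {E : Type*} [MeasurableSpace E] (ν : Measure E) {h : E → ℝ}
    (H : ¬ Integrable (fun x => (h x) ^ 2) ν) : norm2 ν h = 0 := by
  unfold norm2
  rw [integral_undef H, Real.sqrt_zero]

lemma my_sqrt_add_le {x y : ℝ} (hx : 0 ≤ x) (hy : 0 ≤ y) :
    Real.sqrt (x + y) ≤ Real.sqrt x + Real.sqrt y := by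
  have h1 : x + y ≤ (Real.sqrt x + Real.sqrt y) ^ 2 := by
    have hx' := Real.sq_sqrt hx
    have hy' := Real.sq_sqrt hy
    nlinarith [mul_nonneg (Real.sqrt_nonneg x) (Real.sqrt_nonneg y)]
  calc Real.sqrt (x + y) ≤ Real.sqrt ((Real.sqrt x + Real.sqrt y) ^ 2) := Real.sqrt_le_sqrt h1
    _ = Real.sqrt x + Real.sqrt y := Real.sqrt_sq (by positivity)

/-- Main comparison lemma: if `u² ≤ K²(A² + B²)` a.e. with `A², B²` integrable, then
`‖u‖ ≤ K(‖A‖ + ‖B‖)`. -/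
lemma norm2_le_two {E : Type*} [MeasurableSpace E] (ν : Measure E) {u A B : E → ℝ} {K : ℝ}
    (hK : 0 ≤ K)
    (hA : Integrable (fun x => (A x) ^ 2) ν) (hB : Integrable (fun x => (B x) ^ 2) ν)
    (hle : ∀ᵐ x ∂ν, (u x) ^ 2 ≤ K ^ 2 * ((A x) ^ 2 + (B x) ^ 2)) :
    norm2 ν u ≤ K * (norm2 ν A + norm2 ν B) := by
  have hint : Integrable (fun x => K ^ 2 * ((A x) ^ 2 + (B x) ^ 2)) ν :=
    (hA.add hB).const_mul _
  have h1 : (∫ x, (u x) ^ 2 ∂ν) ≤ K ^ 2 * ((∫ x, (A x) ^ 2 ∂ν) + ∫ x, (B x) ^ 2 ∂ν) := by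
    have := integral_mono_of_nonneg (Eventually.of_forall fun x => sq_nonneg (u x)) hint hle
    rwa [integral_const_mul, integral_add hA hB] at this
  have hAnn : 0 ≤ ∫ x, (A x) ^ 2 ∂ν := integral_nonneg fun x => sq_nonneg _
  have hBnn : 0 ≤ ∫ x, (B x) ^ 2 ∂ν := integral_nonneg fun x => sq_nonneg _
  calc norm2 ν u ≤ Real.sqrt (K ^ 2 * ((∫ x, (A x) ^ 2 ∂ν) + ∫ x, (B x) ^ 2 ∂ν)) :=
        Real.sqrt_le_sqrt h1
    _ = K * Real.sqrt ((∫ x, (A x) ^ 2 ∂ν) + ∫ x, (B x) ^ 2 ∂ν) := by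
        rw [Real.sqrt_mul (sq_nonneg K), Real.sqrt_sq hK]
    _ ≤ K * (norm2 ν A + norm2 ν B) :=
        mul_le_mul_of_nonneg_left (my_sqrt_add_le hAnn hBnn) hK

set_option maxHeartbeats 1000000 in
lemma ptwise_u_le (fn gn fx gx d C ε : ℝ) (hC : 1 ≤ C) (hε : 0 < ε)
    (hfC : |fx| ≤ C) (hgl : ε ≤ |gx|) (hgu : |gx| ≤ C)
    (hgnl : ε ≤ |gn|) (hgnu : |gn| ≤ C)
    (hdu : |d| ≤ C / ε) :
    (fn / gn - fx / gx) ^ 2 ≤ (2*C/ε^2) ^ 2 * ((fn - fx*d) ^ 2 + (gn - gx*d) ^ 2) := by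
  have hC0 : (0:ℝ) < C := lt_of_lt_of_le one_pos hC
  have hgne : gx ≠ 0 := fun h => by rw [h, abs_zero] at hgl; linarith
  have hgnne : gn ≠ 0 := fun h => by rw [h, abs_zero] at hgnl; linarith
  set A := fn - fx*d with hA
  set B := gn - gx*d with hB
  set u := fn / gn - fx / gx with hu
  have hf2 : fx ^ 2 ≤ C ^ 2 := by nlinarith [sq_abs fx, abs_nonneg fx]
  have hg2l : ε ^ 2 ≤ gx ^ 2 := by nlinarith [sq_abs gx]
  have hg2u : gx ^ 2 ≤ C ^ 2 := by nlinarith [sq_abs gx, abs_nonneg gx]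
  have hgn2l : ε ^ 2 ≤ gn ^ 2 := by nlinarith [sq_abs gn]
  have key : u = (A*gx - fx*B)/(gn*gx) := by
    rw [hu, hA, hB]; field_simp; ring
  have h4 : (A*gx - fx*B)^2 ≤ 2*C^2*(A^2+B^2) := by
    nlinarith [sq_nonneg (A*gx + fx*B),
      mul_le_mul_of_nonneg_left hg2u (sq_nonneg A),
      mul_le_mul_of_nonneg_left hf2 (sq_nonneg B)]
  have h5 : ε^2*ε^2 ≤ (gn*gx)^2 := by
    rw [mul_pow]
    exact mul_le_mul hgn2l hg2l (sq_nonneg ε) (le_trans (sq_nonneg ε) hgn2l)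
  have h6 : u^2 = (A*gx - fx*B)^2 / (gn*gx)^2 := by rw [key, div_pow]
  rw [h6]
  have h7 : (A*gx - fx*B)^2 / (gn*gx)^2 ≤ 2*C^2*(A^2+B^2) / (ε^2*ε^2) :=
    div_le_div₀ (by positivity) h4 (by positivity) h5
  refine le_trans h7 ?_
  rw [div_le_iff₀ (by positivity)]
  have hs : (0:ℝ) ≤ A^2 + B^2 := by positivity
  have heq : (2*C/ε^2)^2 * (A^2+B^2) * (ε^2*ε^2) = 4*C^2*(A^2+B^2) := by
    field_simp; ring
  rw [heq]
  have h8 : (0:ℝ) ≤ 2*C^2*(A^2+B^2) := by positivity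
  linarith

lemma ptwise_B_bd (gn gx d C ε : ℝ) (hC : 1 ≤ C) (hε : 0 < ε)
    (hgu : |gx| ≤ C) (hgnu : |gn| ≤ C) (hdu : |d| ≤ C / ε) :
    |gn - gx*d| ≤ C + C*(C/ε) := by
  have hC0 : (0:ℝ) < C := lt_of_lt_of_le one_pos hC
  have h1 : |gx * d| ≤ C * (C/ε) := by
    rw [abs_mul]
    exact mul_le_mul hgu hdu (abs_nonneg d) (le_of_lt hC0)
  calc |gn - gx*d| ≤ |gn| + |gx * d| := abs_sub _ _
    _ ≤ C + C*(C/ε) := add_le_add hgnu h1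

set_option maxHeartbeats 1000000 in
lemma ptwise_A_le (fn gn fx gx d C ε : ℝ) (hC : 1 ≤ C) (hε : 0 < ε)
    (hfC : |fx| ≤ C) (hgl : ε ≤ |gx|) (hgu : |gx| ≤ C)
    (hgnl : ε ≤ |gn|) (hgnu : |gn| ≤ C) (hdu : |d| ≤ C / ε) :
    (fn - fx*d) ^ 2 ≤ 2*C^2*(fn / gn - fx / gx)^2 + 2*(C*(C + C*(C/ε))/ε)^2 := by
  have hC0 : (0:ℝ) < C := lt_of_lt_of_le one_pos hC
  have hgne : gx ≠ 0 := fun h => by rw [h, abs_zero] at hgl; linarith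
  have hgnne : gn ≠ 0 := fun h => by rw [h, abs_zero] at hgnl; linarith
  have hBb : |gn - gx*d| ≤ C + C*(C/ε) := ptwise_B_bd gn gx d C ε hC hε hgu hgnu hdu
  set B := gn - gx*d with hB
  set u := fn / gn - fx / gx with hu
  set p := gn*u with hp
  set q := fx*(B/gx) with hq
  set D := C*(C + C*(C/ε))/ε with hD
  have key : fn - fx*d = p + q := by
    rw [hp, hq, hu, hB]; field_simp; ring
  have h1 : |p| ≤ C * |u| := by
    rw [hp, abs_mul]; exact mul_le_mul_of_nonneg_right hgnu (abs_nonneg u)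
  have h2 : |q| ≤ D := by
    rw [hq, abs_mul, abs_div]
    have hdd : |B|/|gx| ≤ (C + C*(C/ε))/ε :=
      div_le_div₀ (by positivity) hBb hε hgl
    calc |fx| * (|B|/|gx|) ≤ C * ((C + C*(C/ε))/ε) :=
          mul_le_mul hfC hdd (by positivity) (le_of_lt hC0)
      _ = D := by rw [hD]; ring
  have hp2 : p^2 ≤ C^2*u^2 := by
    rw [← sq_abs p]
    calc |p|^2 ≤ (C*|u|)^2 := pow_le_pow_left₀ (abs_nonneg _) h1 2
      _ = C^2*u^2 := by rw [mul_pow, sq_abs]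
  have hq2 : q^2 ≤ D^2 := by
    rw [← sq_abs q]
    exact pow_le_pow_left₀ (abs_nonneg _) h2 2
  rw [key]
  have hexp : (p + q)^2 ≤ 2*p^2 + 2*q^2 := by nlinarith [sq_nonneg (p - q)]
  calc (p + q)^2 ≤ 2*p^2 + 2*q^2 := hexp
    _ ≤ 2*(C^2*u^2) + 2*D^2 := by linarith
    _ = 2*C^2*u^2 + 2*D^2 := by ring

set_option maxHeartbeats 1000000 in
lemma fwd_A_le (fn gn fx gx C ε : ℝ) (hC : 1 ≤ C) (hε : 0 < ε)
    (hgl : ε ≤ |gx|) (hgnl : ε ≤ |gn|) (hgnu : |gn| ≤ C) :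
    (fn - fx * (gn / gx)) ^ 2 ≤ C ^ 2 * ((fn / gn - fx / gx) ^ 2 + (0:ℝ) ^ 2) := by
  have hgne : gx ≠ 0 := fun h => by rw [h, abs_zero] at hgl; linarith
  have hgnne : gn ≠ 0 := fun h => by rw [h, abs_zero] at hgnl; linarith
  have key : fn - fx * (gn / gx) = gn * (fn / gn - fx / gx) := by
    field_simp
  rw [key]
  have h1 : gn ^ 2 ≤ C ^ 2 := by nlinarith [sq_abs gn, abs_nonneg gn]
  nlinarith [sq_nonneg (fn / gn - fx / gx),
    mul_le_mul_of_nonneg_right h1 (sq_nonneg (fn / gn - fx / gx))]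

set_option maxHeartbeats 1000000 in
lemma fwd_u_le (fn gn fx gx C ε : ℝ) (hC : 1 ≤ C) (hε : 0 < ε)
    (hgl : ε ≤ |gx|) (hgnl : ε ≤ |gn|) :
    (fn / gn - fx / gx) ^ 2 ≤ (1/ε) ^ 2 * ((fn - fx * (gn / gx)) ^ 2 + (0:ℝ) ^ 2) := by
  have hgne : gx ≠ 0 := fun h => by rw [h, abs_zero] at hgl; linarith
  have hgnne : gn ≠ 0 := fun h => by rw [h, abs_zero] at hgnl; linarith
  have key : fn - fx * (gn / gx) = gn * (fn / gn - fx / gx) := by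
    field_simp
  rw [key]
  have h1 : ε ^ 2 ≤ gn ^ 2 := by nlinarith [sq_abs gn]
  rw [div_pow, one_pow, one_div, inv_mul_eq_div, le_div_iff₀ (by positivity : (0:ℝ) < ε ^ 2)]
  nlinarith [mul_le_mul_of_nonneg_right h1 (sq_nonneg (fn / gn - fx / gx))]

/-- Characterization of L² ratio consistency (Section 2.4, (S.2) ⇔ (S.3)):
`n^{−a}·‖fₙ/gₙ − f/g‖ → 0` iff there are measurable `δₙ` with
`ε/C ≤ |δₙ| ≤ C/ε` ν-a.e. such that `n^{−a}·(‖fₙ − f·δₙ‖ + ‖gₙ − g·δₙ‖) → 0`. -/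
theorem ratio_L2_consistency_characterization
    {E : Type*} [MeasurableSpace E] (ν : Measure E) [IsFiniteMeasure ν]
    (a : ℝ) (ha : a ≤ 0)
    (f g : E → ℝ) (fN gN : ℕ → E → ℝ)
    (hf : Measurable f) (hg : Measurable g)
    (hfN : ∀ n, Measurable (fN n)) (hgN : ∀ n, Measurable (gN n))
    (C ε : ℝ) (hC : 1 ≤ C) (hε : 0 < ε)
    (hbd : ∀ᵐ x ∂ν, |f x| ≤ C ∧ ε ≤ |g x| ∧ |g x| ≤ C ∧
      ∀ n, ε ≤ |gN n x| ∧ |gN n x| ≤ C) :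
    Tendsto (fun n : ℕ => (n : ℝ) ^ (-a) *
        norm2 ν (fun x => fN n x / gN n x - f x / g x)) atTop (nhds 0) ↔
    ∃ δ : ℕ → E → ℝ, (∀ n, Measurable (δ n)) ∧
      (∀ᵐ x ∂ν, ∀ n, ε / C ≤ |δ n x| ∧ |δ n x| ≤ C / ε) ∧
      Tendsto (fun n : ℕ => (n : ℝ) ^ (-a) *
          (norm2 ν (fun x => fN n x - f x * δ n x) +
            norm2 ν (fun x => gN n x - g x * δ n x)))
        atTop (nhds 0) := by
  have hC0 : (0:ℝ) < C := lt_of_lt_of_le one_pos hC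
  have hrn : ∀ n : ℕ, (0:ℝ) ≤ (n : ℝ) ^ (-a) := fun n => Real.rpow_nonneg (Nat.cast_nonneg n) _
  have humeas : ∀ n, Measurable (fun x => fN n x / gN n x - f x / g x) :=
    fun n => ((hfN n).div (hgN n)).sub (hf.div hg)
  constructor
  · -- (S.2) → (S.3): take δₙ := gₙ / g
    intro hT
    refine ⟨fun n x => gN n x / g x, fun n => (hgN n).div hg, ?_, ?_⟩
    · filter_upwards [hbd] with x hx n
      obtain ⟨hfC, hgl, hgu, hgn⟩ := hx
      obtain ⟨hgnl, hgnu⟩ := hgn n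
      have hgpos : (0:ℝ) < |g x| := lt_of_lt_of_le hε hgl
      rw [abs_div]
      constructor
      · rw [div_le_div_iff₀ hC0 hgpos]; nlinarith
      · rw [div_le_div_iff₀ hgpos hε]; nlinarith
    · -- squeeze against C * (n^{-a} ‖uₙ‖)
      apply squeeze_zero (g := fun n : ℕ => C * ((n : ℝ) ^ (-a) *
          norm2 ν (fun x => fN n x / gN n x - f x / g x)))
      · intro n
        exact mul_nonneg (hrn n) (add_nonneg (norm2_nonneg _ _) (norm2_nonneg _ _))
      · intro n
        set u := fun x => fN n x / gN n x - f x / g x with hu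
        set A := fun x => fN n x - f x * (gN n x / g x) with hA
        set B := fun x => gN n x - g x * (gN n x / g x) with hB
        have hBzero : norm2 ν B = 0 := by
          have hBz : (fun x => (B x) ^ 2) =ᵐ[ν] (fun _ => (0:ℝ)) := by
            filter_upwards [hbd] with x hx
            have hgne : g x ≠ 0 := fun h => by
              rw [h, abs_zero] at hx; linarith [hx.2.1]
            simp only [hB]
            rw [mul_div_cancel₀ _ hgne]
            simp
          unfold norm2
          rw [integral_congr_ae hBz, integral_const]
          simp
        have hzero2 : Integrable (fun _ : E => (0:ℝ) ^ 2) ν := by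
          simpa using integrable_const (0:ℝ)
        have hznorm : norm2 ν (fun _ : E => (0:ℝ)) = 0 := by
          unfold norm2; simp
        have hAle : norm2 ν A ≤ C * norm2 ν u := by
          by_cases hui : Integrable (fun x => (u x) ^ 2) ν
          · have h := norm2_le_two (u := A) (A := u) (B := fun _ : E => (0:ℝ)) ν
              (le_of_lt hC0) hui hzero2 ?_
            · calc norm2 ν A ≤ C * (norm2 ν u + norm2 ν (fun _ : E => (0:ℝ))) := h
                _ = C * norm2 ν u := by rw [hznorm, add_zero]
            · filter_upwards [hbd] with x hx
              obtain ⟨hfC, hgl, hgu, hgn⟩ := hx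
              obtain ⟨hgnl, hgnu⟩ := hgn n
              exact fwd_A_le (fN n x) (gN n x) (f x) (g x) C ε hC hε hgl hgnl hgnu
          · have hAni : ¬ Integrable (fun x => (A x) ^ 2) ν := by
              intro hAi
              apply hui
              refine Integrable.mono' (hAi.const_mul ((1/ε) ^ 2)) ?_ ?_
              · exact ((humeas n).pow_const 2).aestronglyMeasurable
              · filter_upwards [hbd] with x hx
                obtain ⟨hfC, hgl, hgu, hgn⟩ := hx
                obtain ⟨hgnl, hgnu⟩ := hgn n
                rw [Real.norm_eq_abs, abs_of_nonneg (sq_nonneg _)]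
                have := fwd_u_le (fN n x) (gN n x) (f x) (g x) C ε hC hε hgl hgnl
                calc (u x) ^ 2 ≤ (1/ε) ^ 2 * ((A x) ^ 2 + (0:ℝ) ^ 2) := this
                  _ = (1/ε) ^ 2 * (A x) ^ 2 := by ring
            rw [norm2_of_not_integrable ν hAni]
            exact mul_nonneg (le_of_lt hC0) (norm2_nonneg ν u)
        calc (n : ℝ) ^ (-a) * (norm2 ν A + norm2 ν B)
            = (n : ℝ) ^ (-a) * norm2 ν A := by rw [hBzero, add_zero]
          _ ≤ (n : ℝ) ^ (-a) * (C * norm2 ν u) := mul_le_mul_of_nonneg_left hAle (hrn n)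
          _ = C * ((n : ℝ) ^ (-a) * norm2 ν u) := by ring
      · simpa using hT.const_mul C
  · -- (S.3) → (S.2)
    rintro ⟨δ, hδm, hδbd, hT⟩
    apply squeeze_zero (g := fun n : ℕ => (2*C/ε^2) * ((n : ℝ) ^ (-a) *
        (norm2 ν (fun x => fN n x - f x * δ n x) +
          norm2 ν (fun x => gN n x - g x * δ n x))))
    · intro n
      exact mul_nonneg (hrn n) (norm2_nonneg _ _)
    · intro n
      set u := fun x => fN n x / gN n x - f x / g x with hu
      set A := fun x => fN n x - f x * δ n x with hA
      set B := fun x => gN n x - g x * δ n x with hB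
      have hKnn : (0:ℝ) ≤ 2*C/ε^2 := by positivity
      have hAmeas : Measurable A := (hfN n).sub (hf.mul (hδm n))
      have hBmeas : Measurable B := (hgN n).sub (hg.mul (hδm n))
      have hBi : Integrable (fun x => (B x) ^ 2) ν := by
        refine Integrable.mono' (integrable_const ((C + C*(C/ε)) ^ 2)) ?_ ?_
        · exact (hBmeas.pow_const 2).aestronglyMeasurable
        · filter_upwards [hbd, hδbd] with x hx hd
          obtain ⟨hfC, hgl, hgu, hgn⟩ := hx
          obtain ⟨hgnl, hgnu⟩ := hgn n
          obtain ⟨hdl, hdu⟩ := hd n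
          rw [Real.norm_eq_abs, abs_of_nonneg (sq_nonneg _)]
          have hb := ptwise_B_bd (gN n x) (g x) (δ n x) C ε hC hε hgu hgnu hdu
          calc (B x) ^ 2 = |B x| ^ 2 := (sq_abs _).symm
            _ ≤ (C + C*(C/ε)) ^ 2 := pow_le_pow_left₀ (abs_nonneg _) hb 2
      have hule : norm2 ν u ≤ (2*C/ε^2) * (norm2 ν A + norm2 ν B) := by
        by_cases hAi : Integrable (fun x => (A x) ^ 2) ν
        · refine norm2_le_two ν hKnn hAi hBi ?_
          filter_upwards [hbd, hδbd] with x hx hd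
          obtain ⟨hfC, hgl, hgu, hgn⟩ := hx
          obtain ⟨hgnl, hgnu⟩ := hgn n
          obtain ⟨hdl, hdu⟩ := hd n
          exact ptwise_u_le (fN n x) (gN n x) (f x) (g x) (δ n x) C ε hC hε
            hfC hgl hgu hgnl hgnu hdu
        · have huni : ¬ Integrable (fun x => (u x) ^ 2) ν := by
            intro hui
            apply hAi
            refine Integrable.mono' ((hui.const_mul (2*C^2)).add
              (integrable_const (2*(C*(C + C*(C/ε))/ε) ^ 2))) ?_ ?_
            · exact (hAmeas.pow_const 2).aestronglyMeasurable
            · filter_upwards [hbd, hδbd] with x hx hd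
              obtain ⟨hfC, hgl, hgu, hgn⟩ := hx
              obtain ⟨hgnl, hgnu⟩ := hgn n
              obtain ⟨hdl, hdu⟩ := hd n
              rw [Real.norm_eq_abs, abs_of_nonneg (sq_nonneg _)]
              exact ptwise_A_le (fN n x) (gN n x) (f x) (g x) (δ n x) C ε hC hε
                hfC hgl hgu hgnl hgnu hdu
          rw [norm2_of_not_integrable ν huni]
          exact mul_nonneg hKnn (add_nonneg (norm2_nonneg _ _) (norm2_nonneg _ _))
      calc (n : ℝ) ^ (-a) * norm2 ν u
          ≤ (n : ℝ) ^ (-a) * ((2*C/ε^2) * (norm2 ν A + norm2 ν B)) :=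
            mul_le_mul_of_nonneg_left hule (hrn n)
        _ = (2*C/ε^2) * ((n : ℝ) ^ (-a) * (norm2 ν A + norm2 ν B)) := by ring
    · simpa using hT.const_mul (2*C/ε^2)
end

section
/- Unbiasedness of the uncentered influence function at the truth (content of Lemma 1): E[ H₁(μ₁₁, μ₁₀, m₀, τ) ] = α₁; equivalently, the influence function A₁ := H₁(μ₁₁, μ₁₀, m₀, τ) − κ·(1−S)·α₁ has mean zero. -/
open MeasureTheory

/-- The norm `‖f‖ = (E[f(X)²])^{1/2}`. -/
noncomputable def normX {Ω E : Type*} [MeasurableSpace Ω]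
    (P : Measure Ω) (X : Ω → E) (f : E → ℝ) : ℝ :=
  Real.sqrt (∫ ω, (f (X ω)) ^ 2 ∂P)

/-- Admissible nuisance candidates for Scenario 1. -/
def Admissible1 {Ω E : Type*} [MeasurableSpace Ω] [MeasurableSpace E]
    (P : Measure Ω) (X : Ω → E) (ε M : ℝ) (m11 m10 m00 t : E → ℝ) : Prop :=
  Measurable m11 ∧ Measurable m10 ∧ Measurable m00 ∧ Measurable t ∧
    ∀ᵐ ω ∂P, ε ≤ |m10 (X ω)| ∧ |m11 (X ω)| ≤ M ∧ |m10 (X ω)| ≤ M ∧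
      |m00 (X ω)| ≤ M ∧ 0 ≤ t (X ω) ∧ t (X ω) ≤ M

/-- The Scenario 1 uncentered estimating function `H₁`, with `κ = 1/P(S=0)`. -/
noncomputable def H1 {Ω E : Type*} [MeasurableSpace Ω]
    (P : Measure Ω) (X : Ω → E) (S A Y : Ω → ℝ) (q m11 m10 m00 t : E → ℝ) :
    Ω → ℝ := fun ω =>
  (P {ω' | S ω' = 0}).toReal⁻¹ *
    ((1 - S ω) * (m11 (X ω) / m10 (X ω)) * Y ω +
      S ω * t (X ω) * (m00 (X ω) / m10 (X ω)) *
        (A ω / q (X ω) * (Y ω - m11 (X ω)) -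
          (1 - A ω) / (1 - q (X ω)) * (m11 (X ω) / m10 (X ω)) * (Y ω - m10 (X ω))))

lemma isVersion_apply_ae {Ω E : Type*} [MeasurableSpace Ω] [MeasurableSpace E]
    (P : Measure Ω) (X : Ω → E) (Z : Ω → ℝ) (B : Set Ω) (m : E → ℝ)
    (hv : IsVersion P X Z B m) (h : E → ℝ) (hh : Measurable h)
    (C : ℝ) (hbd : ∀ᵐ ω ∂P, |h (X ω)| ≤ C) :
    ∫ ω in B, Z ω * h (X ω) ∂P = ∫ ω in B, m (X ω) * h (X ω) ∂P := by
  set C' := max C 0 with hC'def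
  have hC0 : (0:ℝ) ≤ C' := le_max_right C 0
  set h' : E → ℝ := fun x => max (-C') (min C' (h x)) with hh'def
  have hh' : Measurable h' := measurable_const.max (measurable_const.min hh)
  have hbd' : ∀ x, |h' x| ≤ C' := by
    intro x
    rw [abs_le]
    exact ⟨le_max_left _ _, max_le (by linarith) (min_le_left _ _)⟩
  have heq : ∀ᵐ ω ∂P, h' (X ω) = h (X ω) := by
    filter_upwards [hbd] with ω hω
    have h1 : h (X ω) ≤ C' := le_trans (le_abs_self _) (hω.trans (le_max_left C 0))
    have h2 : -C' ≤ h (X ω) := by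
      have : -C' ≤ -|h (X ω)| := neg_le_neg (hω.trans (le_max_left C 0))
      linarith [neg_abs_le (h (X ω))]
    simp [hh'def, min_eq_right h1, max_eq_right h2]
  have key := hv.2 h' hh' ⟨C', hbd'⟩
  have e1 : ∫ ω in B, Z ω * h (X ω) ∂P = ∫ ω in B, Z ω * h' (X ω) ∂P :=
    integral_congr_ae (ae_restrict_of_ae (heq.mono fun ω hω => by simp only [hω]))
  have e2 : ∫ ω in B, m (X ω) * h (X ω) ∂P = ∫ ω in B, m (X ω) * h' (X ω) ∂P :=
    integral_congr_ae (ae_restrict_of_ae (heq.mono fun ω hω => by simp only [hω]))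
  rw [e1, e2, key]


/-- Lemma 1 -/
theorem H1_unbiased_at_truth
    {Ω E : Type*} [MeasurableSpace Ω] [MeasurableSpace E]
    (P : Measure Ω) [IsProbabilityMeasure P]
    (X : Ω → E) (S A Y : Ω → ℝ)
    (hX : Measurable X) (hS : Measurable S) (hA : Measurable A) (hY : Measurable Y)
    (hS01 : ∀ ω, S ω = 0 ∨ S ω = 1) (hA01 : ∀ ω, A ω = 0 ∨ A ω = 1)
    (hPS0 : 0 < P {ω | S ω = 0})
    (hPS1A1 : 0 < P {ω | S ω = 1 ∧ A ω = 1})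
    (hPS1A0 : 0 < P {ω | S ω = 1 ∧ A ω = 0})
    (μ11 μ10 m0 g q : E → ℝ)
    (hμ11 : IsVersion P X Y {ω | S ω = 1 ∧ A ω = 1} μ11)
    (hμ10 : IsVersion P X Y {ω | S ω = 1 ∧ A ω = 0} μ10)
    (hm0 : IsVersion P X Y {ω | S ω = 0} m0)
    (hg : IsVersion P X S Set.univ g)
    (hq : IsVersion P X A {ω | S ω = 1} q)
    (ε M : ℝ) (hε0 : 0 < ε) (hε1 : ε < 1) (hM : 1 ≤ M)
    (hbd : ∀ᵐ ω ∂P,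
      ε ≤ g (X ω) ∧ g (X ω) ≤ 1 - ε ∧ ε ≤ q (X ω) ∧ q (X ω) ≤ 1 - ε ∧
      ε ≤ |μ10 (X ω)| ∧ |μ11 (X ω)| ≤ M ∧ |μ10 (X ω)| ≤ M ∧ |m0 (X ω)| ≤ M ∧
      |Y ω| ≤ M ∧ (1 - g (X ω)) / g (X ω) ≤ M)
    (htruth : Admissible1 P X ε M μ11 μ10 m0 (fun x => (1 - g x) / g x))
    :
    ∫ ω, H1 P X S A Y q μ11 μ10 m0 (fun x => (1 - g x) / g x) ω ∂P
      = condMean P (fun ω => μ11 (X ω) / μ10 (X ω) * Y ω) {ω | S ω = 0} ∧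
    ∫ ω, (H1 P X S A Y q μ11 μ10 m0 (fun x => (1 - g x) / g x) ω -
        (P {ω' | S ω' = 0}).toReal⁻¹ * (1 - S ω) *
          condMean P (fun ω' => μ11 (X ω') / μ10 (X ω') * Y ω') {ω' | S ω' = 0}) ∂P
      = 0 := by
  classical
  obtain ⟨hm11m, hm10m, hm0m, htm, htae⟩ := htruth
  have hqm : Measurable q := hq.1
  have hMpos : (0:ℝ) < M := lt_of_lt_of_le one_pos hM
  set t : E → ℝ := fun x => (1 - g x) / g x with htdef
  set κ : ℝ := (P {ω' | S ω' = 0}).toReal⁻¹ with hκdef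
  set B0 : Set Ω := {ω | S ω = 0} with hB0def
  set B11 : Set Ω := {ω | S ω = 1 ∧ A ω = 1} with hB11def
  set B10 : Set Ω := {ω | S ω = 1 ∧ A ω = 0} with hB10def
  have hB0m : MeasurableSet B0 := hS (measurableSet_singleton 0)
  have hB11m : MeasurableSet B11 :=
    (hS (measurableSet_singleton 1)).inter (hA (measurableSet_singleton 1))
  have hB10m : MeasurableSet B10 :=
    (hS (measurableSet_singleton 1)).inter (hA (measurableSet_singleton 0))
  have hPB0 : (P B0).toReal ≠ 0 :=
    (ENNReal.toReal_pos hPS0.ne' (measure_ne_top P _)).ne'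
  -- test functions
  set f1 : E → ℝ := fun x => μ11 x / μ10 x with hf1def
  set h1 : E → ℝ := fun x => t x * (m0 x / μ10 x) / q x with hh1def
  set h2 : E → ℝ := fun x => t x * (m0 x / μ10 x) * (μ11 x / μ10 x) / (1 - q x) with hh2def
  have hf1m : Measurable f1 := hm11m.div hm10m
  have hh1m : Measurable h1 := (htm.mul (hm0m.div hm10m)).div hqm
  have hh2m : Measurable h2 :=
    ((htm.mul (hm0m.div hm10m)).mul (hm11m.div hm10m)).div (measurable_const.sub hqm)
  -- a.e. bounds
  have hf1bd : ∀ᵐ ω ∂P, |f1 (X ω)| ≤ M / ε := by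
    filter_upwards [hbd] with ω hω
    obtain ⟨_, _, _, _, hμ10l, hμ11u, _, _, _, _⟩ := hω
    simp only [hf1def]
    rw [abs_div]
    exact div_le_div₀ hMpos.le hμ11u hε0 hμ10l
  have hh1bd : ∀ᵐ ω ∂P, |h1 (X ω)| ≤ M * (M / ε) / ε := by
    filter_upwards [hbd] with ω hω
    obtain ⟨hg1, hg2, hq1, _, hμ10l, _, _, hm0u, _, htu⟩ := hω
    have ht0 : 0 ≤ t (X ω) := div_nonneg (by linarith) (by linarith)
    have hqpos : 0 < q (X ω) := lt_of_lt_of_le hε0 hq1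
    have hgpos : 0 < g (X ω) := lt_of_lt_of_le hε0 hg1
    have hg1n : (0:ℝ) ≤ 1 - g (X ω) := by linarith
    simp only [hh1def, htdef, abs_div, abs_mul]
    rw [abs_of_nonneg hg1n, abs_of_pos hgpos, abs_of_pos hqpos]
    exact div_le_div₀ (by positivity)
      (mul_le_mul htu (div_le_div₀ hMpos.le hm0u hε0 hμ10l) (by positivity) hMpos.le)
      hε0 hq1
  have hh2bd : ∀ᵐ ω ∂P, |h2 (X ω)| ≤ M * (M / ε) * (M / ε) / ε := by
    filter_upwards [hbd] with ω hω
    obtain ⟨hg1, hg2, _, hq2, hμ10l, hμ11u, _, hm0u, _, htu⟩ := hω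
    have ht0 : 0 ≤ t (X ω) := div_nonneg (by linarith) (by linarith)
    have hq1pos : 0 < 1 - q (X ω) := by linarith
    have hq1l : ε ≤ 1 - q (X ω) := by linarith
    have hgpos : 0 < g (X ω) := lt_of_lt_of_le hε0 hg1
    have hg1n : (0:ℝ) ≤ 1 - g (X ω) := by linarith
    simp only [hh2def, htdef, abs_div, abs_mul]
    rw [abs_of_nonneg hg1n, abs_of_pos hgpos, abs_of_pos hq1pos]
    refine div_le_div₀ (by positivity) ?_ hε0 hq1l
    refine mul_le_mul ?_ (div_le_div₀ hMpos.le hμ11u hε0 hμ10l) (by positivity) (by positivity)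
    exact mul_le_mul htu (div_le_div₀ hMpos.le hm0u hε0 hμ10l) (by positivity) hMpos.le
  -- integrability helper
  have integ_of_bd : ∀ (f : Ω → ℝ), Measurable f → ∀ (C : ℝ),
      (∀ᵐ ω ∂P, |f ω| ≤ C) → Integrable f P := by
    intro f hf C hC
    exact (integrable_const C).mono' hf.aestronglyMeasurable
      (hC.mono fun ω h => by rwa [Real.norm_eq_abs])
  -- the three pieces
  set F1 : Ω → ℝ := fun ω => μ11 (X ω) / μ10 (X ω) * Y ω with hF1def
  set G2a : Ω → ℝ := fun ω => (Y ω - μ11 (X ω)) * h1 (X ω) with hG2adef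
  set G2b : Ω → ℝ := fun ω => (Y ω - μ10 (X ω)) * h2 (X ω) with hG2bdef
  have hF1int : Integrable F1 P := by
    refine integ_of_bd F1 ((hf1m.comp hX).mul hY) (M / ε * M) ?_
    filter_upwards [hbd, hf1bd] with ω hω hf
    obtain ⟨_, _, _, _, _, _, _, _, hYu, _⟩ := hω
    simp only [hF1def]
    rw [abs_mul]
    exact mul_le_mul hf hYu (abs_nonneg _) (by positivity)
  have hG2aint : Integrable G2a P := by
    refine integ_of_bd G2a ((hY.sub (hm11m.comp hX)).mul (hh1m.comp hX))
      ((M + M) * (M * (M / ε) / ε)) ?_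
    filter_upwards [hbd, hh1bd] with ω hω hh
    obtain ⟨_, _, _, _, _, hμ11u, _, _, hYu, _⟩ := hω
    simp only [hG2adef]
    rw [abs_mul]
    refine mul_le_mul ?_ hh (abs_nonneg _) (by positivity)
    calc |Y ω - μ11 (X ω)| ≤ |Y ω| + |μ11 (X ω)| := abs_sub _ _
      _ ≤ M + M := add_le_add hYu hμ11u
  have hG2bint : Integrable G2b P := by
    refine integ_of_bd G2b ((hY.sub (hm10m.comp hX)).mul (hh2m.comp hX))
      ((M + M) * (M * (M / ε) * (M / ε) / ε)) ?_
    filter_upwards [hbd, hh2bd] with ω hω hh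
    obtain ⟨_, _, _, _, _, _, hμ10u, _, hYu, _⟩ := hω
    simp only [hG2bdef]
    rw [abs_mul]
    refine mul_le_mul ?_ hh (abs_nonneg _) (by positivity)
    calc |Y ω - μ10 (X ω)| ≤ |Y ω| + |μ10 (X ω)| := abs_sub _ _
      _ ≤ M + M := add_le_add hYu hμ10u
  -- pointwise decomposition
  have hdecomp : ∀ ω, H1 P X S A Y q μ11 μ10 m0 t ω =
      κ * (B0.indicator F1 ω + (B11.indicator G2a ω - B10.indicator G2b ω)) := by
    intro ω
    rcases hS01 ω with hs | hs
    · have h0 : ω ∈ B0 := hs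
      have h11 : ω ∉ B11 := fun h => by rw [hB11def] at h; simp [hs] at h
      have h10 : ω ∉ B10 := fun h => by rw [hB10def] at h; simp [hs] at h
      rw [Set.indicator_of_mem h0, Set.indicator_of_notMem h11,
        Set.indicator_of_notMem h10]
      simp only [H1, hs, hF1def]
      ring
    · rcases hA01 ω with ha | ha
      · have h0 : ω ∉ B0 := fun h => by rw [hB0def] at h; simp [hs] at h
        have h11 : ω ∉ B11 := fun h => by rw [hB11def] at h; simp [ha] at h
        have h10 : ω ∈ B10 := ⟨hs, ha⟩
        rw [Set.indicator_of_notMem h0, Set.indicator_of_notMem h11,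
          Set.indicator_of_mem h10]
        simp only [H1, hs, ha, hG2bdef, hh2def, hf1def]
        ring
      · have h0 : ω ∉ B0 := fun h => by rw [hB0def] at h; simp [hs] at h
        have h11 : ω ∈ B11 := ⟨hs, ha⟩
        have h10 : ω ∉ B10 := fun h => by rw [hB10def] at h; simp [ha] at h
        rw [Set.indicator_of_notMem h0, Set.indicator_of_mem h11,
          Set.indicator_of_notMem h10]
        simp only [H1, hs, ha, hG2adef, hh1def]
        ring
  -- vanishing of the correction terms
  have hT2a : ∫ ω, B11.indicator G2a ω ∂P = 0 := by
    rw [integral_indicator hB11m]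
    have hsplit : ∫ ω in B11, G2a ω ∂P =
        (∫ ω in B11, Y ω * h1 (X ω) ∂P) - ∫ ω in B11, μ11 (X ω) * h1 (X ω) ∂P := by
      rw [← integral_sub
        ((integ_of_bd (fun ω => Y ω * h1 (X ω)) (hY.mul (hh1m.comp hX)) (M * (M * (M / ε) / ε)) (by
          filter_upwards [hbd, hh1bd] with ω hω hh
          rw [abs_mul]
          exact mul_le_mul hω.2.2.2.2.2.2.2.2.1 hh (abs_nonneg _) hMpos.le)).restrict)
        ((integ_of_bd (fun ω => μ11 (X ω) * h1 (X ω)) ((hm11m.comp hX).mul (hh1m.comp hX)) (M * (M * (M / ε) / ε)) (by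
          filter_upwards [hbd, hh1bd] with ω hω hh
          rw [abs_mul]
          exact mul_le_mul hω.2.2.2.2.2.1 hh (abs_nonneg _) hMpos.le)).restrict)]
      exact integral_congr_ae (Filter.Eventually.of_forall fun ω => by
        simp only [hG2adef]; ring)
    rw [hsplit, isVersion_apply_ae P X Y B11 μ11 hμ11 h1 hh1m _ hh1bd, sub_self]
  have hT2b : ∫ ω, B10.indicator G2b ω ∂P = 0 := by
    rw [integral_indicator hB10m]
    have hsplit : ∫ ω in B10, G2b ω ∂P =
        (∫ ω in B10, Y ω * h2 (X ω) ∂P) - ∫ ω in B10, μ10 (X ω) * h2 (X ω) ∂P := by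
      rw [← integral_sub
        ((integ_of_bd (fun ω => Y ω * h2 (X ω)) (hY.mul (hh2m.comp hX)) (M * (M * (M / ε) * (M / ε) / ε)) (by
          filter_upwards [hbd, hh2bd] with ω hω hh
          rw [abs_mul]
          exact mul_le_mul hω.2.2.2.2.2.2.2.2.1 hh (abs_nonneg _) hMpos.le)).restrict)
        ((integ_of_bd (fun ω => μ10 (X ω) * h2 (X ω)) ((hm10m.comp hX).mul (hh2m.comp hX)) (M * (M * (M / ε) * (M / ε) / ε)) (by
          filter_upwards [hbd, hh2bd] with ω hω hh
          rw [abs_mul]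
          exact mul_le_mul hω.2.2.2.2.2.2.1 hh (abs_nonneg _) hMpos.le)).restrict)]
      exact integral_congr_ae (Filter.Eventually.of_forall fun ω => by
        simp only [hG2bdef]; ring)
    rw [hsplit, isVersion_apply_ae P X Y B10 μ10 hμ10 h2 hh2m _ hh2bd, sub_self]
  -- main integral computation
  have hmain : ∫ ω, H1 P X S A Y q μ11 μ10 m0 t ω ∂P = κ * ∫ ω in B0, F1 ω ∂P := by
    have hsubint : Integrable (fun a => B11.indicator G2a a - B10.indicator G2b a) P :=
      (hG2aint.indicator hB11m).sub (hG2bint.indicator hB10m)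
    rw [integral_congr_ae (Filter.Eventually.of_forall hdecomp), integral_const_mul,
      integral_add (hF1int.indicator hB0m) hsubint,
      integral_sub (hG2aint.indicator hB11m) (hG2bint.indicator hB10m),
      hT2a, hT2b, sub_self, add_zero, integral_indicator hB0m]
  have hcm : condMean P (fun ω => μ11 (X ω) / μ10 (X ω) * Y ω) B0 = κ * ∫ ω in B0, F1 ω ∂P := by
    rw [condMean, hκdef, div_eq_mul_inv, mul_comm]
  constructor
  · rw [hmain, hcm]
  · have hH1int : Integrable (H1 P X S A Y q μ11 μ10 m0 t) P :=
      (((hF1int.indicator hB0m).add ((hG2aint.indicator hB11m).sub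
        (hG2bint.indicator hB10m))).const_mul κ).congr
        (Filter.Eventually.of_forall fun ω => (hdecomp ω).symm)
    set α : ℝ := condMean P (fun ω' => μ11 (X ω') / μ10 (X ω') * Y ω') B0 with hαdef
    have hSint : Integrable S P := integ_of_bd S hS 1
      (Filter.Eventually.of_forall fun ω => by rcases hS01 ω with h | h <;> simp [h])
    have hcint : Integrable (fun ω => κ * (1 - S ω) * α) P :=
      (((integrable_const (1:ℝ)).sub hSint).const_mul κ).mul_const α
    rw [integral_sub hH1int hcint]
    have hind : ∀ ω, (1:ℝ) - S ω = B0.indicator (fun _ => (1:ℝ)) ω := by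
      intro ω
      rcases hS01 ω with h | h
      · have hm : ω ∈ B0 := h
        rw [Set.indicator_of_mem hm, h, sub_zero]
      · have hm : ω ∉ B0 := fun hm => by rw [hB0def] at hm; simp [h] at hm
        rw [Set.indicator_of_notMem hm, h, sub_self]
    have hc : ∫ ω, κ * (1 - S ω) * α ∂P = α := by
      have : ∫ ω, κ * (1 - S ω) * α ∂P = κ * (∫ ω, (1 - S ω) ∂P) * α := by
        rw [integral_mul_const, integral_const_mul]
      rw [this, integral_congr_ae (Filter.Eventually.of_forall hind),
        integral_indicator_const _ hB0m]
      simp only [smul_eq_mul, mul_one]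
      rw [hκdef, show P.real B0 = (P B0).toReal from rfl, inv_mul_cancel₀ hPB0, one_mul]
    rw [hc, hmain, ← hcm, sub_self]
end

section
/- Product-form bias bound underlying double robustness (Theorem 2, bound by R₁,ₙ): there is a constant C, depending only on ε, M and P(S=0), such that for all admissible nuisance candidates μ̃₁₁, μ̃₁₀, μ̃₀₀, τ̃: | E[ H₁(μ̃₁₁, μ̃₁₀, μ̃₀₀, τ̃) ] − α₁ | ≤ C · ‖ μ̃₁₁/μ̃₁₀ − μ₁₁/μ₁₀ ‖ · ( ‖μ̃₀₀ − m₀‖ + ‖μ̃₁₀ − μ₁₀‖ + ‖τ̃ − τ‖ ). -/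
open MeasureTheory

namespace DRaux

lemma bsub {a b A B : ℝ} (h1 : |a| ≤ A) (h2 : |b| ≤ B) : |a - b| ≤ A + B := by
  calc |a - b| = |a + -b| := by ring_nf
    _ ≤ |a| + |-b| := abs_add_le _ _
    _ ≤ A + B := by rw [abs_neg]; exact add_le_add h1 h2

lemma badd {a b A B : ℝ} (h1 : |a| ≤ A) (h2 : |b| ≤ B) : |a + b| ≤ A + B :=
  (abs_add_le _ _).trans (add_le_add h1 h2)

lemma bmul {a b A B : ℝ} (h1 : |a| ≤ A) (h2 : |b| ≤ B) : |a * b| ≤ A * B := by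
  rw [abs_mul]
  exact mul_le_mul h1 h2 (abs_nonneg b) ((abs_nonneg a).trans h1)

lemma bdiv {a b A ε : ℝ} (hε : 0 < ε) (h1 : |a| ≤ A) (h2 : ε ≤ |b|) : |a / b| ≤ A / ε := by
  rw [abs_div]
  exact div_le_div₀ ((abs_nonneg a).trans h1) h1 hε h2

/-- clamp to `[-C, C]`. -/
noncomputable def clamp (C : ℝ) (f : ℝ) : ℝ := max (-C) (min C f)

lemma clamp_eq {C f : ℝ} (h : |f| ≤ C) : clamp C f = f := by
  rcases abs_le.1 h with ⟨h1, h2⟩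
  unfold clamp
  rw [min_eq_right h2, max_eq_right h1]

lemma clamp_abs_le {C f : ℝ} (hC : 0 ≤ C) : |clamp C f| ≤ C := by
  unfold clamp
  rw [abs_le]
  constructor
  · exact le_max_left _ _
  · exact max_le (by linarith) ((min_le_left _ _))

lemma measurable_clamp {E : Type*} [MeasurableSpace E] {f : E → ℝ} (hf : Measurable f) (C : ℝ) :
    Measurable fun x => clamp C (f x) := by
  unfold clamp
  exact measurable_const.max (measurable_const.min hf)

lemma version_apply {Ω E : Type*} [MeasurableSpace Ω] [MeasurableSpace E]
    {P : Measure Ω} {X : Ω → E} {Z : Ω → ℝ} {B : Set Ω} {m : E → ℝ}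
    (hv : IsVersion P X Z B m) (h : E → ℝ) (hh : Measurable h)
    {C : ℝ} (hC : 0 ≤ C) (hbd : ∀ᵐ ω ∂P, |h (X ω)| ≤ C) :
    ∫ ω in B, Z ω * h (X ω) ∂P = ∫ ω in B, m (X ω) * h (X ω) ∂P := by
  have key := hv.2 (fun x => clamp C (h x)) (measurable_clamp hh C)
    ⟨C, fun x => clamp_abs_le hC⟩
  have hae : ∀ᵐ ω ∂(P.restrict B), clamp C (h (X ω)) = h (X ω) :=
    ae_restrict_of_ae (hbd.mono fun ω hω => clamp_eq hω)
  calc ∫ ω in B, Z ω * h (X ω) ∂P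
      = ∫ ω in B, Z ω * clamp C (h (X ω)) ∂P :=
        integral_congr_ae (hae.mono fun ω hω => by dsimp only; rw [hω])
    _ = ∫ ω in B, m (X ω) * clamp C (h (X ω)) ∂P := key
    _ = ∫ ω in B, m (X ω) * h (X ω) ∂P :=
        integral_congr_ae (hae.mono fun ω hω => by dsimp only; rw [hω])

lemma intgr {Ω : Type*} [MeasurableSpace Ω] {P : Measure Ω} [IsFiniteMeasure P]
    {f : Ω → ℝ} (hf : AEStronglyMeasurable f P) {C : ℝ} (h : ∀ᵐ ω ∂P, |f ω| ≤ C) :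
    Integrable f P :=
  Integrable.mono' (integrable_const C) hf (by simpa [Real.norm_eq_abs] using h)

/-- Cauchy–Schwarz for bounded a.e.-measurable functions. -/
lemma cauchy_schwarz {Ω : Type*} [MeasurableSpace Ω] (P : Measure Ω) [IsProbabilityMeasure P]
    (u v : Ω → ℝ) (hu : AEStronglyMeasurable u P) (hv : AEStronglyMeasurable v P)
    {Cu Cv : ℝ} (hbu : ∀ᵐ ω ∂P, |u ω| ≤ Cu) (hbv : ∀ᵐ ω ∂P, |v ω| ≤ Cv) :
    ∫ ω, |u ω| * |v ω| ∂P ≤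
      Real.sqrt (∫ ω, u ω ^ 2 ∂P) * Real.sqrt (∫ ω, v ω ^ 2 ∂P) := by
  have hpq : Real.HolderConjugate 2 2 := Real.holderConjugate_iff.mpr ⟨one_lt_two, by norm_num⟩
  have hmu : MemLp (fun ω => |u ω|) (ENNReal.ofReal 2) P :=
    MemLp.of_bound (by simpa [Real.norm_eq_abs] using hu.norm) Cu (hbu.mono fun ω h => by simpa [Real.norm_eq_abs, abs_abs] using h)
  have hmv : MemLp (fun ω => |v ω|) (ENNReal.ofReal 2) P :=
    MemLp.of_bound (by simpa [Real.norm_eq_abs] using hv.norm) Cv (hbv.mono fun ω h => by simpa [Real.norm_eq_abs, abs_abs] using h)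
  have key := integral_mul_le_Lp_mul_Lq_of_nonneg hpq
    (Filter.Eventually.of_forall fun ω => abs_nonneg (u ω))
    (Filter.Eventually.of_forall fun ω => abs_nonneg (v ω)) hmu hmv
  have e1 : ∫ ω, |u ω| ^ (2:ℝ) ∂P = ∫ ω, u ω ^ 2 ∂P := by
    refine integral_congr_ae (Filter.Eventually.of_forall fun ω => ?_)
    dsimp only
    rw [show |u ω| ^ (2:ℝ) = |u ω| ^ (2:ℕ) from by
      rw [← Real.rpow_natCast]; norm_num, sq_abs]
  have e2 : ∫ ω, |v ω| ^ (2:ℝ) ∂P = ∫ ω, v ω ^ 2 ∂P := by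
    refine integral_congr_ae (Filter.Eventually.of_forall fun ω => ?_)
    dsimp only
    rw [show |v ω| ^ (2:ℝ) = |v ω| ^ (2:ℕ) from by
      rw [← Real.rpow_natCast]; norm_num, sq_abs]
  rw [e1, e2] at key
  calc ∫ ω, |u ω| * |v ω| ∂P
      ≤ (∫ ω, u ω ^ 2 ∂P) ^ (1/2 : ℝ) * (∫ ω, v ω ^ 2 ∂P) ^ (1/2 : ℝ) := key
    _ = Real.sqrt (∫ ω, u ω ^ 2 ∂P) * Real.sqrt (∫ ω, v ω ^ 2 ∂P) := by
        rw [Real.sqrt_eq_rpow, Real.sqrt_eq_rpow]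

lemma setIntegral_eq_weight {Ω : Type*} [MeasurableSpace Ω] (P : Measure Ω) {B : Set Ω}
    (hB : MeasurableSet B) (w f : Ω → ℝ)
    (hw1 : ∀ ω ∈ B, w ω = 1) (hw0 : ∀ ω ∉ B, w ω = 0) :
    ∫ ω in B, f ω ∂P = ∫ ω, w ω * f ω ∂P := by
  rw [← integral_indicator hB]
  refine integral_congr_ae (Filter.Eventually.of_forall fun ω => ?_)
  by_cases h : ω ∈ B
  · simp [Set.indicator_of_mem h, hw1 ω h]
  · simp [Set.indicator_of_notMem h, hw0 ω h]

lemma babs {a A : ℝ} (h : |a| ≤ A) : |(|a|)| ≤ A := by rwa [abs_abs]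

end DRaux

set_option maxHeartbeats 1000000 in
/-- Product-form bias bound underlying double robustness (Theorem 2, bound by `R₁,ₙ`):
there is a constant `C`, depending only on `ε`, `M` and `P(S=0)`, such that for all
admissible nuisance candidates,
`|E[H₁(μ̃₁₁,μ̃₁₀,μ̃₀₀,τ̃)] − α₁| ≤ C·‖μ̃₁₁/μ̃₁₀ − μ₁₁/μ₁₀‖·(‖μ̃₀₀ − m₀‖ + ‖μ̃₁₀ − μ₁₀‖ + ‖τ̃ − τ‖)`. -/
theorem H1_product_bias_bound
    {Ω E : Type*} [MeasurableSpace Ω] [MeasurableSpace E]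
    (P : Measure Ω) [IsProbabilityMeasure P]
    (X : Ω → E) (S A Y : Ω → ℝ)
    (hX : Measurable X) (hS : Measurable S) (hA : Measurable A) (hY : Measurable Y)
    (hS01 : ∀ ω, S ω = 0 ∨ S ω = 1) (hA01 : ∀ ω, A ω = 0 ∨ A ω = 1)
    (hPS0 : 0 < P {ω | S ω = 0})
    (hPS1A1 : 0 < P {ω | S ω = 1 ∧ A ω = 1})
    (hPS1A0 : 0 < P {ω | S ω = 1 ∧ A ω = 0})
    (μ11 μ10 m0 g q : E → ℝ)
    (hμ11 : IsVersion P X Y {ω | S ω = 1 ∧ A ω = 1} μ11)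
    (hμ10 : IsVersion P X Y {ω | S ω = 1 ∧ A ω = 0} μ10)
    (hm0 : IsVersion P X Y {ω | S ω = 0} m0)
    (hg : IsVersion P X S Set.univ g)
    (hq : IsVersion P X A {ω | S ω = 1} q)
    (ε M : ℝ) (hε0 : 0 < ε) (hε1 : ε < 1) (hM : 1 ≤ M)
    (hbd : ∀ᵐ ω ∂P,
      ε ≤ g (X ω) ∧ g (X ω) ≤ 1 - ε ∧ ε ≤ q (X ω) ∧ q (X ω) ≤ 1 - ε ∧
      ε ≤ |μ10 (X ω)| ∧ |μ11 (X ω)| ≤ M ∧ |μ10 (X ω)| ≤ M ∧ |m0 (X ω)| ≤ M ∧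
      |Y ω| ≤ M ∧ (1 - g (X ω)) / g (X ω) ≤ M)
    (htruth : Admissible1 P X ε M μ11 μ10 m0 (fun x => (1 - g x) / g x))
    :
    ∃ C : ℝ, ∀ m11 m10 m00 t : E → ℝ, Admissible1 P X ε M m11 m10 m00 t →
      |(∫ ω, H1 P X S A Y q m11 m10 m00 t ω ∂P) -
          condMean P (fun ω => μ11 (X ω) / μ10 (X ω) * Y ω) {ω | S ω = 0}|
        ≤ C * normX P X (fun x => m11 x / m10 x - μ11 x / μ10 x) *
            (normX P X (fun x => m00 x - m0 x) +
              normX P X (fun x => m10 x - μ10 x) +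
              normX P X (fun x => t x - (1 - g x) / g x)) := by
  classical
  have hkpos : 0 < (P {ω | S ω = 0}).toReal :=
    ENNReal.toReal_pos hPS0.ne' (measure_ne_top P _)
  set k : ℝ := (P {ω | S ω = 0}).toReal with hk_def
  refine ⟨k⁻¹ * (M ^ 2 / ε), ?_⟩
  intro m11 m10 m00 t hadm
  obtain ⟨hm11m, hm10m, hm00m, htm, hadm_ae⟩ := hadm
  have hμ11m := hμ11.1
  have hμ10m := hμ10.1
  have hm0m := hm0.1
  have hgm := hg.1
  have hqm := hq.1
  have htruth_ae := htruth.2.2.2.2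
  -- measurable sets
  have mS0 : MeasurableSet {ω | S ω = 0} := hS (measurableSet_singleton 0)
  have mS1 : MeasurableSet {ω | S ω = 1} := hS (measurableSet_singleton 1)
  have mS1A1 : MeasurableSet {ω | S ω = 1 ∧ A ω = 1} :=
    (hS (measurableSet_singleton 1)).inter (hA (measurableSet_singleton 1))
  have mS1A0 : MeasurableSet {ω | S ω = 1 ∧ A ω = 0} :=
    (hS (measurableSet_singleton 1)).inter (hA (measurableSet_singleton 0))
  -- pointwise facts about S and A
  have hSb : ∀ ω, |S ω| ≤ 1 := by
    intro ω; rcases hS01 ω with h | h <;> rw [h] <;> norm_num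
  have hAb : ∀ ω, |A ω| ≤ 1 := by
    intro ω; rcases hA01 ω with h | h <;> rw [h] <;> norm_num
  have hSb' : ∀ ω, |1 - S ω| ≤ 1 := by
    intro ω; rcases hS01 ω with h | h <;> rw [h] <;> norm_num
  have hAb' : ∀ ω, |1 - A ω| ≤ 1 := by
    intro ω; rcases hA01 ω with h | h <;> rw [h] <;> norm_num
  -- weight identities
  have ind0 : ∀ f : Ω → ℝ, ∫ ω in {ω | S ω = 0}, f ω ∂P = ∫ ω, (1 - S ω) * f ω ∂P := by
    intro f
    refine DRaux.setIntegral_eq_weight P mS0 _ f (fun ω hω => ?_) (fun ω hω => ?_)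
    · have : S ω = 0 := hω
      rw [this]; ring
    · have : S ω = 1 := (hS01 ω).resolve_left hω
      rw [this]; ring
  have ind1 : ∀ f : Ω → ℝ, ∫ ω in {ω | S ω = 1}, f ω ∂P = ∫ ω, S ω * f ω ∂P := by
    intro f
    refine DRaux.setIntegral_eq_weight P mS1 _ f (fun ω hω => hω) (fun ω hω => ?_)
    exact (hS01 ω).resolve_right hω
  have ind11 : ∀ f : Ω → ℝ,
      ∫ ω in {ω | S ω = 1 ∧ A ω = 1}, f ω ∂P = ∫ ω, S ω * A ω * f ω ∂P := by
    intro f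
    refine DRaux.setIntegral_eq_weight P mS1A1 _ f (fun ω hω => ?_) (fun ω hω => ?_)
    · obtain ⟨h1, h2⟩ := hω; rw [h1, h2]; ring
    · rw [Set.mem_setOf_eq, not_and_or] at hω
      rcases hω with h | h
      · rw [(hS01 ω).resolve_right h]; ring
      · rw [(hA01 ω).resolve_right h]; ring
  have ind10 : ∀ f : Ω → ℝ,
      ∫ ω in {ω | S ω = 1 ∧ A ω = 0}, f ω ∂P = ∫ ω, S ω * (1 - A ω) * f ω ∂P := by
    intro f
    refine DRaux.setIntegral_eq_weight P mS1A0 _ f (fun ω hω => ?_) (fun ω hω => ?_)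
    · obtain ⟨h1, h2⟩ := hω; rw [h1, h2]; ring
    · rw [Set.mem_setOf_eq, not_and_or] at hω
      rcases hω with h | h
      · rw [(hS01 ω).resolve_right h]; ring
      · rw [(hA01 ω).resolve_left h]; ring
  -- integral congruence helpers
  have icongr : ∀ {f f' : Ω → ℝ}, (∀ ω, f ω = f' ω) →
      ∫ ω, f ω ∂P = ∫ ω, f' ω ∂P := fun h =>
    integral_congr_ae (Filter.Eventually.of_forall h)
  have icongrB : ∀ (B : Set Ω) (f f' : Ω → ℝ), (∀ ω, f ω = f' ω) →
      ∫ ω in B, f ω ∂P = ∫ ω in B, f' ω ∂P := fun B f f' h =>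
    integral_congr_ae (Filter.Eventually.of_forall h)
  have icongrae : ∀ {f f' : Ω → ℝ}, (∀ᵐ ω ∂P, f ω = f' ω) →
      ∫ ω, f ω ∂P = ∫ ω, f' ω ∂P := fun h => integral_congr_ae h
  -- integrability helper
  have Ib : ∀ (f : Ω → ℝ), Measurable f → ∀ C : ℝ, (∀ᵐ ω ∂P, |f ω| ≤ C) →
      Integrable f P := fun f hf C h => DRaux.intgr hf.aestronglyMeasurable h
  -- master a.e. pack
  have hP : ∀ᵐ ω ∂P,
      (ε ≤ g (X ω) ∧ g (X ω) ≤ 1 - ε ∧ ε ≤ q (X ω) ∧ q (X ω) ≤ 1 - ε ∧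
        ε ≤ |μ10 (X ω)| ∧ |μ11 (X ω)| ≤ M ∧ |μ10 (X ω)| ≤ M ∧ |m0 (X ω)| ≤ M ∧
        |Y ω| ≤ M ∧ (1 - g (X ω)) / g (X ω) ≤ M) ∧
      (ε ≤ |m10 (X ω)| ∧ |m11 (X ω)| ≤ M ∧ |m10 (X ω)| ≤ M ∧ |m00 (X ω)| ≤ M ∧
        0 ≤ t (X ω) ∧ t (X ω) ≤ M) := hbd.and hadm_ae
  have hM0 : (0:ℝ) < M := lt_of_lt_of_le one_pos hM
  -- T1a chain
  have hT1a : ∫ ω, S ω * A ω *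
        (t (X ω) * (m00 (X ω) / m10 (X ω)) / q (X ω) * (Y ω - m11 (X ω))) ∂P
      = ∫ ω, g (X ω) *
        ((μ11 (X ω) - m11 (X ω)) * (t (X ω) * (m00 (X ω) / m10 (X ω)))) ∂P := by
    have hφqm : Measurable fun x => t x * (m00 x / m10 x) / q x :=
      (htm.mul (hm00m.div hm10m)).div hqm
    have hφqb : ∀ᵐ ω ∂P, |t (X ω) * (m00 (X ω) / m10 (X ω)) / q (X ω)| ≤ M * (M / ε) / ε := by
      filter_upwards [hP] with ω hω
      obtain ⟨⟨hg1, hg2, hq1, hq2, hμ10ε, hμ11M, hμ10M, hm0M, hYM, hτM⟩,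
        hm10ε, hm11M, hm10M, hm00M, ht0, htM⟩ := hω
      exact DRaux.bdiv hε0
        (DRaux.bmul (abs_le.2 ⟨by linarith, htM⟩) (DRaux.bdiv hε0 hm00M hm10ε))
        (le_trans hq1 (le_abs_self _))
    have I1 : Integrable (fun ω => S ω * A ω *
        (Y ω * (t (X ω) * (m00 (X ω) / m10 (X ω)) / q (X ω)))) P := by
      refine Ib _ ?_ (1 * 1 * (M * (M * (M / ε) / ε))) ?_
      · exact (hS.mul hA).mul (hY.mul (hφqm.comp hX))
      · filter_upwards [hP, hφqb] with ω hω hb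
        exact DRaux.bmul (DRaux.bmul (hSb ω) (hAb ω)) (DRaux.bmul hω.1.2.2.2.2.2.2.2.2.1 hb)
    have I2 : Integrable (fun ω => S ω * A ω *
        (m11 (X ω) * (t (X ω) * (m00 (X ω) / m10 (X ω)) / q (X ω)))) P := by
      refine Ib _ ?_ (1 * 1 * (M * (M * (M / ε) / ε))) ?_
      · exact (hS.mul hA).mul ((hm11m.comp hX).mul (hφqm.comp hX))
      · filter_upwards [hP, hφqb] with ω hω hb
        exact DRaux.bmul (DRaux.bmul (hSb ω) (hAb ω)) (DRaux.bmul hω.2.2.1 hb)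
    calc ∫ ω, S ω * A ω *
          (t (X ω) * (m00 (X ω) / m10 (X ω)) / q (X ω) * (Y ω - m11 (X ω))) ∂P
        = ∫ ω, (S ω * A ω * (Y ω * (t (X ω) * (m00 (X ω) / m10 (X ω)) / q (X ω)))
            - S ω * A ω * (m11 (X ω) * (t (X ω) * (m00 (X ω) / m10 (X ω)) / q (X ω)))) ∂P :=
          icongr fun ω => by ring
      _ = (∫ ω, S ω * A ω * (Y ω * (t (X ω) * (m00 (X ω) / m10 (X ω)) / q (X ω))) ∂P)
          - ∫ ω, S ω * A ω * (m11 (X ω) * (t (X ω) * (m00 (X ω) / m10 (X ω)) / q (X ω))) ∂P :=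
          integral_sub I1 I2
      _ = (∫ ω in {ω | S ω = 1 ∧ A ω = 1},
              Y ω * (t (X ω) * (m00 (X ω) / m10 (X ω)) / q (X ω)) ∂P)
          - ∫ ω in {ω | S ω = 1 ∧ A ω = 1},
              m11 (X ω) * (t (X ω) * (m00 (X ω) / m10 (X ω)) / q (X ω)) ∂P := by
          rw [ind11, ind11]
      _ = (∫ ω in {ω | S ω = 1 ∧ A ω = 1},
              μ11 (X ω) * (t (X ω) * (m00 (X ω) / m10 (X ω)) / q (X ω)) ∂P)
          - ∫ ω in {ω | S ω = 1 ∧ A ω = 1},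
              m11 (X ω) * (t (X ω) * (m00 (X ω) / m10 (X ω)) / q (X ω)) ∂P := by
          rw [DRaux.version_apply hμ11 _ hφqm (by positivity) hφqb]
      _ = ∫ ω in {ω | S ω = 1 ∧ A ω = 1},
            (μ11 (X ω) - m11 (X ω)) * (t (X ω) * (m00 (X ω) / m10 (X ω)) / q (X ω)) ∂P := by
          rw [← integral_sub]
          · exact integral_congr_ae (Filter.Eventually.of_forall fun ω => by dsimp only; ring)
          · exact Integrable.restrict (Ib _ ((hμ11m.comp hX).mul (hφqm.comp hX))
              (M * (M * (M / ε) / ε)) (by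
                filter_upwards [hP, hφqb] with ω hω hb
                exact DRaux.bmul hω.1.2.2.2.2.2.1 hb))
          · exact Integrable.restrict (Ib _ ((hm11m.comp hX).mul (hφqm.comp hX))
              (M * (M * (M / ε) / ε)) (by
                filter_upwards [hP, hφqb] with ω hω hb
                exact DRaux.bmul hω.2.2.1 hb))
      _ = ∫ ω, S ω * A ω *
            ((μ11 (X ω) - m11 (X ω)) * (t (X ω) * (m00 (X ω) / m10 (X ω)) / q (X ω))) ∂P :=
          ind11 _
      _ = ∫ ω, S ω * (A ω *
            ((μ11 (X ω) - m11 (X ω)) * (t (X ω) * (m00 (X ω) / m10 (X ω)) / q (X ω)))) ∂P :=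
          icongr fun ω => by ring
      _ = ∫ ω in {ω | S ω = 1}, A ω *
            ((μ11 (X ω) - m11 (X ω)) * (t (X ω) * (m00 (X ω) / m10 (X ω)) / q (X ω))) ∂P :=
          (ind1 _).symm
      _ = ∫ ω in {ω | S ω = 1}, q (X ω) *
            ((μ11 (X ω) - m11 (X ω)) * (t (X ω) * (m00 (X ω) / m10 (X ω)) / q (X ω))) ∂P := by
          refine DRaux.version_apply hq _
            ((hμ11m.sub hm11m).mul hφqm) (C := (M + M) * (M * (M / ε) / ε)) (by positivity) ?_
          filter_upwards [hP, hφqb] with ω hω hb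
          exact DRaux.bmul (DRaux.bsub hω.1.2.2.2.2.2.1 hω.2.2.1) hb
      _ = ∫ ω, S ω * (q (X ω) *
            ((μ11 (X ω) - m11 (X ω)) * (t (X ω) * (m00 (X ω) / m10 (X ω)) / q (X ω)))) ∂P :=
          ind1 _
      _ = ∫ ω in Set.univ, S ω * (q (X ω) *
            ((μ11 (X ω) - m11 (X ω)) * (t (X ω) * (m00 (X ω) / m10 (X ω)) / q (X ω)))) ∂P := by
          rw [Measure.restrict_univ]
      _ = ∫ ω in Set.univ, g (X ω) * (q (X ω) *
            ((μ11 (X ω) - m11 (X ω)) * (t (X ω) * (m00 (X ω) / m10 (X ω)) / q (X ω)))) ∂P := by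
          refine DRaux.version_apply hg _
            (hqm.mul ((hμ11m.sub hm11m).mul hφqm)) (C := 1 * ((M + M) * (M * (M / ε) / ε)))
            (by positivity) ?_
          filter_upwards [hP, hφqb] with ω hω hb
          obtain ⟨⟨hg1, hg2, hq1, hq2, hμ10ε, hμ11M, hμ10M, hm0M, hYM, hτM⟩,
            hm10ε, hm11M, hm10M, hm00M, ht0, htM⟩ := hω
          exact DRaux.bmul (abs_le.2 ⟨by linarith, by linarith⟩)
            (DRaux.bmul (DRaux.bsub hμ11M hm11M) hb)
      _ = ∫ ω, g (X ω) * (q (X ω) *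
            ((μ11 (X ω) - m11 (X ω)) * (t (X ω) * (m00 (X ω) / m10 (X ω)) / q (X ω)))) ∂P := by
          rw [Measure.restrict_univ]
      _ = ∫ ω, g (X ω) *
            ((μ11 (X ω) - m11 (X ω)) * (t (X ω) * (m00 (X ω) / m10 (X ω)))) ∂P := by
          refine icongrae ?_
          filter_upwards [hP] with ω hω
          have hqne : q (X ω) ≠ 0 := ne_of_gt (lt_of_lt_of_le hε0 hω.1.2.2.1)
          have h1 : t (X ω) * (m00 (X ω) / m10 (X ω)) / q (X ω) * q (X ω)
              = t (X ω) * (m00 (X ω) / m10 (X ω)) := div_mul_cancel₀ _ hqne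
          linear_combination (g (X ω) * (μ11 (X ω) - m11 (X ω))) * h1
  -- T1b chain
  have hT1b : ∫ ω, S ω * (1 - A ω) *
        (m11 (X ω) / m10 (X ω) * (t (X ω) * (m00 (X ω) / m10 (X ω)) / (1 - q (X ω)))
          * (Y ω - m10 (X ω))) ∂P
      = ∫ ω, g (X ω) * ((μ10 (X ω) - m10 (X ω)) * (m11 (X ω) / m10 (X ω))
          * (t (X ω) * (m00 (X ω) / m10 (X ω)))) ∂P := by
    have hψm : Measurable fun x => m11 x / m10 x * (t x * (m00 x / m10 x) / (1 - q x)) :=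
      (hm11m.div hm10m).mul ((htm.mul (hm00m.div hm10m)).div (measurable_const.sub hqm))
    have hψb : ∀ᵐ ω ∂P, |m11 (X ω) / m10 (X ω) *
        (t (X ω) * (m00 (X ω) / m10 (X ω)) / (1 - q (X ω)))| ≤ M / ε * (M * (M / ε) / ε) := by
      filter_upwards [hP] with ω hω
      obtain ⟨⟨hg1, hg2, hq1, hq2, hμ10ε, hμ11M, hμ10M, hm0M, hYM, hτM⟩,
        hm10ε, hm11M, hm10M, hm00M, ht0, htM⟩ := hω
      refine DRaux.bmul (DRaux.bdiv hε0 hm11M hm10ε) (DRaux.bdiv hε0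
        (DRaux.bmul (abs_le.2 ⟨by linarith, htM⟩) (DRaux.bdiv hε0 hm00M hm10ε)) ?_)
      exact le_trans (by linarith) (le_abs_self (1 - q (X ω)))
    have I3 : Integrable (fun ω => S ω * (1 - A ω) * (Y ω *
        (m11 (X ω) / m10 (X ω) * (t (X ω) * (m00 (X ω) / m10 (X ω)) / (1 - q (X ω)))))) P := by
      refine Ib _ ?_ (1 * 1 * (M * (M / ε * (M * (M / ε) / ε)))) ?_
      · exact (hS.mul (measurable_const.sub hA)).mul (hY.mul (hψm.comp hX))
      · filter_upwards [hP, hψb] with ω hω hb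
        exact DRaux.bmul (DRaux.bmul (hSb ω) (hAb' ω))
          (DRaux.bmul hω.1.2.2.2.2.2.2.2.2.1 hb)
    have I4 : Integrable (fun ω => S ω * (1 - A ω) * (m10 (X ω) *
        (m11 (X ω) / m10 (X ω) * (t (X ω) * (m00 (X ω) / m10 (X ω)) / (1 - q (X ω)))))) P := by
      refine Ib _ ?_ (1 * 1 * (M * (M / ε * (M * (M / ε) / ε)))) ?_
      · exact (hS.mul (measurable_const.sub hA)).mul ((hm10m.comp hX).mul (hψm.comp hX))
      · filter_upwards [hP, hψb] with ω hω hb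
        exact DRaux.bmul (DRaux.bmul (hSb ω) (hAb' ω)) (DRaux.bmul hω.2.2.2.1 hb)
    have hhm : Measurable fun x => (μ10 x - m10 x) *
        (m11 x / m10 x * (t x * (m00 x / m10 x) / (1 - q x))) :=
      (hμ10m.sub hm10m).mul hψm
    have hhb : ∀ᵐ ω ∂P, |(μ10 (X ω) - m10 (X ω)) *
        (m11 (X ω) / m10 (X ω) * (t (X ω) * (m00 (X ω) / m10 (X ω)) / (1 - q (X ω))))|
        ≤ (M + M) * (M / ε * (M * (M / ε) / ε)) := by
      filter_upwards [hP, hψb] with ω hω hb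
      exact DRaux.bmul (DRaux.bsub hω.1.2.2.2.2.2.2.1 hω.2.2.2.1) hb
    have I5 : Integrable (fun ω => S ω * ((μ10 (X ω) - m10 (X ω)) *
        (m11 (X ω) / m10 (X ω) * (t (X ω) * (m00 (X ω) / m10 (X ω)) / (1 - q (X ω)))))) P := by
      refine Ib _ (hS.mul (hhm.comp hX)) (1 * ((M + M) * (M / ε * (M * (M / ε) / ε)))) ?_
      filter_upwards [hhb] with ω hb
      exact DRaux.bmul (hSb ω) hb
    have I6 : Integrable (fun ω => S ω * (A ω * ((μ10 (X ω) - m10 (X ω)) *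
        (m11 (X ω) / m10 (X ω) * (t (X ω) * (m00 (X ω) / m10 (X ω)) / (1 - q (X ω))))))) P := by
      refine Ib _ (hS.mul (hA.mul (hhm.comp hX)))
        (1 * (1 * ((M + M) * (M / ε * (M * (M / ε) / ε))))) ?_
      filter_upwards [hhb] with ω hb
      exact DRaux.bmul (hSb ω) (DRaux.bmul (hAb ω) hb)
    calc ∫ ω, S ω * (1 - A ω) *
          (m11 (X ω) / m10 (X ω) * (t (X ω) * (m00 (X ω) / m10 (X ω)) / (1 - q (X ω)))
            * (Y ω - m10 (X ω))) ∂P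
        = ∫ ω, (S ω * (1 - A ω) * (Y ω *
            (m11 (X ω) / m10 (X ω) * (t (X ω) * (m00 (X ω) / m10 (X ω)) / (1 - q (X ω)))))
          - S ω * (1 - A ω) * (m10 (X ω) *
            (m11 (X ω) / m10 (X ω) * (t (X ω) * (m00 (X ω) / m10 (X ω)) / (1 - q (X ω)))))) ∂P :=
          icongr fun ω => by ring
      _ = (∫ ω, S ω * (1 - A ω) * (Y ω *
            (m11 (X ω) / m10 (X ω) * (t (X ω) * (m00 (X ω) / m10 (X ω)) / (1 - q (X ω))))) ∂P)
          - ∫ ω, S ω * (1 - A ω) * (m10 (X ω) *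
            (m11 (X ω) / m10 (X ω) * (t (X ω) * (m00 (X ω) / m10 (X ω)) / (1 - q (X ω))))) ∂P :=
          integral_sub I3 I4
      _ = (∫ ω in {ω | S ω = 1 ∧ A ω = 0}, Y ω *
            (m11 (X ω) / m10 (X ω) * (t (X ω) * (m00 (X ω) / m10 (X ω)) / (1 - q (X ω)))) ∂P)
          - ∫ ω in {ω | S ω = 1 ∧ A ω = 0}, m10 (X ω) *
            (m11 (X ω) / m10 (X ω) * (t (X ω) * (m00 (X ω) / m10 (X ω)) / (1 - q (X ω)))) ∂P := by
          rw [ind10, ind10]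
      _ = (∫ ω in {ω | S ω = 1 ∧ A ω = 0}, μ10 (X ω) *
            (m11 (X ω) / m10 (X ω) * (t (X ω) * (m00 (X ω) / m10 (X ω)) / (1 - q (X ω)))) ∂P)
          - ∫ ω in {ω | S ω = 1 ∧ A ω = 0}, m10 (X ω) *
            (m11 (X ω) / m10 (X ω) * (t (X ω) * (m00 (X ω) / m10 (X ω)) / (1 - q (X ω)))) ∂P := by
          rw [DRaux.version_apply hμ10 _ hψm (by positivity) hψb]
      _ = ∫ ω in {ω | S ω = 1 ∧ A ω = 0}, (μ10 (X ω) - m10 (X ω)) *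
            (m11 (X ω) / m10 (X ω) * (t (X ω) * (m00 (X ω) / m10 (X ω)) / (1 - q (X ω)))) ∂P := by
          rw [← integral_sub]
          · exact integral_congr_ae (Filter.Eventually.of_forall fun ω => by dsimp only; ring)
          · exact Integrable.restrict (Ib _ ((hμ10m.comp hX).mul (hψm.comp hX))
              (M * (M / ε * (M * (M / ε) / ε))) (by
                filter_upwards [hP, hψb] with ω hω hb
                exact DRaux.bmul hω.1.2.2.2.2.2.2.1 hb))
          · exact Integrable.restrict (Ib _ ((hm10m.comp hX).mul (hψm.comp hX))
              (M * (M / ε * (M * (M / ε) / ε))) (by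
                filter_upwards [hP, hψb] with ω hω hb
                exact DRaux.bmul hω.2.2.2.1 hb))
      _ = ∫ ω, S ω * (1 - A ω) * ((μ10 (X ω) - m10 (X ω)) *
            (m11 (X ω) / m10 (X ω) * (t (X ω) * (m00 (X ω) / m10 (X ω)) / (1 - q (X ω))))) ∂P :=
          ind10 _
      _ = ∫ ω, (S ω * ((μ10 (X ω) - m10 (X ω)) *
            (m11 (X ω) / m10 (X ω) * (t (X ω) * (m00 (X ω) / m10 (X ω)) / (1 - q (X ω)))))
          - S ω * (A ω * ((μ10 (X ω) - m10 (X ω)) *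
            (m11 (X ω) / m10 (X ω) * (t (X ω) * (m00 (X ω) / m10 (X ω)) / (1 - q (X ω))))))) ∂P :=
          icongr fun ω => by ring
      _ = (∫ ω, S ω * ((μ10 (X ω) - m10 (X ω)) *
            (m11 (X ω) / m10 (X ω) * (t (X ω) * (m00 (X ω) / m10 (X ω)) / (1 - q (X ω))))) ∂P)
          - ∫ ω, S ω * (A ω * ((μ10 (X ω) - m10 (X ω)) *
            (m11 (X ω) / m10 (X ω) * (t (X ω) * (m00 (X ω) / m10 (X ω)) / (1 - q (X ω)))))) ∂P :=
          integral_sub I5 I6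
      _ = (∫ ω, S ω * ((μ10 (X ω) - m10 (X ω)) *
            (m11 (X ω) / m10 (X ω) * (t (X ω) * (m00 (X ω) / m10 (X ω)) / (1 - q (X ω))))) ∂P)
          - ∫ ω in {ω | S ω = 1}, A ω * ((μ10 (X ω) - m10 (X ω)) *
            (m11 (X ω) / m10 (X ω) * (t (X ω) * (m00 (X ω) / m10 (X ω)) / (1 - q (X ω))))) ∂P := by
          rw [ind1]
      _ = (∫ ω, S ω * ((μ10 (X ω) - m10 (X ω)) *
            (m11 (X ω) / m10 (X ω) * (t (X ω) * (m00 (X ω) / m10 (X ω)) / (1 - q (X ω))))) ∂P)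
          - ∫ ω in {ω | S ω = 1}, q (X ω) * ((μ10 (X ω) - m10 (X ω)) *
            (m11 (X ω) / m10 (X ω) * (t (X ω) * (m00 (X ω) / m10 (X ω)) / (1 - q (X ω))))) ∂P := by
          rw [DRaux.version_apply hq _ hhm
            (C := (M + M) * (M / ε * (M * (M / ε) / ε))) (by positivity) hhb]
      _ = (∫ ω, S ω * ((μ10 (X ω) - m10 (X ω)) *
            (m11 (X ω) / m10 (X ω) * (t (X ω) * (m00 (X ω) / m10 (X ω)) / (1 - q (X ω))))) ∂P)
          - ∫ ω, S ω * (q (X ω) * ((μ10 (X ω) - m10 (X ω)) *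
            (m11 (X ω) / m10 (X ω) * (t (X ω) * (m00 (X ω) / m10 (X ω)) / (1 - q (X ω)))))) ∂P := by
          rw [ind1]
      _ = ∫ ω, S ω * ((1 - q (X ω)) * ((μ10 (X ω) - m10 (X ω)) *
            (m11 (X ω) / m10 (X ω) * (t (X ω) * (m00 (X ω) / m10 (X ω)) / (1 - q (X ω)))))) ∂P := by
          rw [← integral_sub I5 (by
            refine Ib _ (hS.mul (hqm.comp hX |>.mul (hhm.comp hX)))
              (1 * (1 * ((M + M) * (M / ε * (M * (M / ε) / ε))))) ?_
            filter_upwards [hP, hhb] with ω hω hb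
            obtain ⟨⟨hg1, hg2, hq1, hq2, _, _, _, _, _, _⟩, _⟩ := hω
            exact DRaux.bmul (hSb ω)
              (DRaux.bmul (abs_le.2 ⟨by linarith, by linarith⟩) hb))]
          exact icongr fun ω => by ring
      _ = ∫ ω in Set.univ, S ω * ((1 - q (X ω)) * ((μ10 (X ω) - m10 (X ω)) *
            (m11 (X ω) / m10 (X ω) * (t (X ω) * (m00 (X ω) / m10 (X ω)) / (1 - q (X ω)))))) ∂P := by
          rw [Measure.restrict_univ]
      _ = ∫ ω in Set.univ, g (X ω) * ((1 - q (X ω)) * ((μ10 (X ω) - m10 (X ω)) *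
            (m11 (X ω) / m10 (X ω) * (t (X ω) * (m00 (X ω) / m10 (X ω)) / (1 - q (X ω)))))) ∂P := by
          refine DRaux.version_apply hg _
            ((measurable_const.sub hqm).mul hhm)
            (C := 1 * ((M + M) * (M / ε * (M * (M / ε) / ε)))) (by positivity) ?_
          filter_upwards [hP, hhb] with ω hω hb
          obtain ⟨⟨hg1, hg2, hq1, hq2, _, _, _, _, _, _⟩, _⟩ := hω
          exact DRaux.bmul (abs_le.2 ⟨by simp only [Pi.sub_apply]; linarith,
            by simp only [Pi.sub_apply]; linarith⟩) hb
      _ = ∫ ω, g (X ω) * ((1 - q (X ω)) * ((μ10 (X ω) - m10 (X ω)) *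
            (m11 (X ω) / m10 (X ω) * (t (X ω) * (m00 (X ω) / m10 (X ω)) / (1 - q (X ω)))))) ∂P := by
          rw [Measure.restrict_univ]
      _ = ∫ ω, g (X ω) * ((μ10 (X ω) - m10 (X ω)) * (m11 (X ω) / m10 (X ω))
            * (t (X ω) * (m00 (X ω) / m10 (X ω)))) ∂P := by
          refine icongrae ?_
          filter_upwards [hP] with ω hω
          have h1qne : (1 : ℝ) - q (X ω) ≠ 0 := by
            have := hω.1.2.2.2.1
            intro hc
            have : q (X ω) = 1 := by linarith
            linarith [hε0, this ▸ hω.1.2.2.2.1]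
          have h1 : t (X ω) * (m00 (X ω) / m10 (X ω)) / (1 - q (X ω)) * (1 - q (X ω))
              = t (X ω) * (m00 (X ω) / m10 (X ω)) := div_mul_cancel₀ _ h1qne
          linear_combination (g (X ω) * (μ10 (X ω) - m10 (X ω)) * (m11 (X ω) / m10 (X ω))) * h1
  -- r and r0 bounds
  have hrdiffm : Measurable fun x => m11 x / m10 x - μ11 x / μ10 x :=
    (hm11m.div hm10m).sub (hμ11m.div hμ10m)
  have hrdiffb : ∀ᵐ ω ∂P, |m11 (X ω) / m10 (X ω) - μ11 (X ω) / μ10 (X ω)| ≤ M / ε + M / ε := by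
    filter_upwards [hP] with ω hω
    obtain ⟨⟨hg1, hg2, hq1, hq2, hμ10ε, hμ11M, hμ10M, hm0M, hYM, hτM⟩,
      hm10ε, hm11M, hm10M, hm00M, ht0, htM⟩ := hω
    exact DRaux.bsub (DRaux.bdiv hε0 hm11M hm10ε) (DRaux.bdiv hε0 hμ11M hμ10ε)
  -- T0 chain
  have hT0 : (∫ ω, (1 - S ω) * (m11 (X ω) / m10 (X ω) * Y ω) ∂P)
      - (∫ ω in {ω | S ω = 0}, μ11 (X ω) / μ10 (X ω) * Y ω ∂P)
      = ∫ ω, (1 - g (X ω)) *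
          ((m11 (X ω) / m10 (X ω) - μ11 (X ω) / μ10 (X ω)) * m0 (X ω)) ∂P := by
    have Ia : Integrable (fun ω => m11 (X ω) / m10 (X ω) * Y ω) P := by
      refine Ib _ ((hm11m.div hm10m |>.comp hX).mul hY) (M / ε * M) ?_
      filter_upwards [hP] with ω hω
      obtain ⟨⟨hg1, hg2, hq1, hq2, hμ10ε, hμ11M, hμ10M, hm0M, hYM, hτM⟩,
        hm10ε, hm11M, hm10M, hm00M, ht0, htM⟩ := hω
      exact DRaux.bmul (DRaux.bdiv hε0 hm11M hm10ε) hYM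
    have Ia0 : Integrable (fun ω => μ11 (X ω) / μ10 (X ω) * Y ω) P := by
      refine Ib _ ((hμ11m.div hμ10m |>.comp hX).mul hY) (M / ε * M) ?_
      filter_upwards [hP] with ω hω
      obtain ⟨⟨hg1, hg2, hq1, hq2, hμ10ε, hμ11M, hμ10M, hm0M, hYM, hτM⟩,
        hm10ε, hm11M, hm10M, hm00M, ht0, htM⟩ := hω
      exact DRaux.bmul (DRaux.bdiv hε0 hμ11M hμ10ε) hYM
    have Im0 : Integrable (fun ω => m0 (X ω) *
        (m11 (X ω) / m10 (X ω) - μ11 (X ω) / μ10 (X ω))) P := by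
      refine Ib _ ((hm0m.comp hX).mul (hrdiffm.comp hX)) (M * (M / ε + M / ε)) ?_
      filter_upwards [hP, hrdiffb] with ω hω hb
      exact DRaux.bmul hω.1.2.2.2.2.2.2.2.1 hb
    have Ig0 : Integrable (fun ω => S ω * (m0 (X ω) *
        (m11 (X ω) / m10 (X ω) - μ11 (X ω) / μ10 (X ω)))) P := by
      refine Ib _ (hS.mul ((hm0m.comp hX).mul (hrdiffm.comp hX)))
        (1 * (M * (M / ε + M / ε))) ?_
      filter_upwards [hP, hrdiffb] with ω hω hb
      exact DRaux.bmul (hSb ω) (DRaux.bmul hω.1.2.2.2.2.2.2.2.1 hb)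
    calc (∫ ω, (1 - S ω) * (m11 (X ω) / m10 (X ω) * Y ω) ∂P)
        - ∫ ω in {ω | S ω = 0}, μ11 (X ω) / μ10 (X ω) * Y ω ∂P
        = (∫ ω in {ω | S ω = 0}, m11 (X ω) / m10 (X ω) * Y ω ∂P)
          - ∫ ω in {ω | S ω = 0}, μ11 (X ω) / μ10 (X ω) * Y ω ∂P := by
          rw [ind0 fun ω => m11 (X ω) / m10 (X ω) * Y ω]
      _ = ∫ ω in {ω | S ω = 0},
            Y ω * (m11 (X ω) / m10 (X ω) - μ11 (X ω) / μ10 (X ω)) ∂P := by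
          rw [← integral_sub Ia.restrict Ia0.restrict]
          exact integral_congr_ae (Filter.Eventually.of_forall fun ω => by dsimp only; ring)
      _ = ∫ ω in {ω | S ω = 0},
            m0 (X ω) * (m11 (X ω) / m10 (X ω) - μ11 (X ω) / μ10 (X ω)) ∂P := by
          refine DRaux.version_apply hm0 _ hrdiffm (C := M / ε + M / ε) (by positivity) hrdiffb
      _ = ∫ ω, (1 - S ω) * (m0 (X ω) *
            (m11 (X ω) / m10 (X ω) - μ11 (X ω) / μ10 (X ω))) ∂P := ind0 _
      _ = (∫ ω, m0 (X ω) * (m11 (X ω) / m10 (X ω) - μ11 (X ω) / μ10 (X ω)) ∂P)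
          - ∫ ω, S ω * (m0 (X ω) *
            (m11 (X ω) / m10 (X ω) - μ11 (X ω) / μ10 (X ω))) ∂P := by
          rw [← integral_sub Im0 Ig0]
          exact icongr fun ω => by ring
      _ = (∫ ω, m0 (X ω) * (m11 (X ω) / m10 (X ω) - μ11 (X ω) / μ10 (X ω)) ∂P)
          - ∫ ω, g (X ω) * (m0 (X ω) *
            (m11 (X ω) / m10 (X ω) - μ11 (X ω) / μ10 (X ω))) ∂P := by
          have := DRaux.version_apply hg
            (fun x => m0 x * (m11 x / m10 x - μ11 x / μ10 x))
            (hm0m.mul hrdiffm) (C := M * (M / ε + M / ε)) (by positivity) (by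
              filter_upwards [hP, hrdiffb] with ω hω hb
              exact DRaux.bmul hω.1.2.2.2.2.2.2.2.1 hb)
          rw [Measure.restrict_univ] at this
          rw [this]
      _ = ∫ ω, (1 - g (X ω)) *
            ((m11 (X ω) / m10 (X ω) - μ11 (X ω) / μ10 (X ω)) * m0 (X ω)) ∂P := by
          rw [← integral_sub Im0 (by
            refine Ib _ (hgm.comp hX |>.mul ((hm0m.comp hX).mul (hrdiffm.comp hX)))
              (1 * (M * (M / ε + M / ε))) ?_
            filter_upwards [hP, hrdiffb] with ω hω hb
            obtain ⟨⟨hg1, hg2, _, _, _, _, _, hm0M, _, _⟩, _⟩ := hω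
            exact DRaux.bmul (abs_le.2 ⟨by linarith, by linarith⟩)
              (DRaux.bmul hm0M hb))]
          exact icongr fun ω => by ring
  -- measurability of W and pieces
  have hWm : Measurable fun ω => (1 - g (X ω)) * m0 (X ω)
      - g (X ω) * (t (X ω) * (m00 (X ω) / m10 (X ω))) * μ10 (X ω) :=
    ((measurable_const.sub (hgm.comp hX)).mul (hm0m.comp hX)).sub
      (((hgm.comp hX).mul ((htm.comp hX).mul ((hm00m.comp hX).div (hm10m.comp hX)))).mul
        (hμ10m.comp hX))
  have hWb : ∀ᵐ ω ∂P, |(1 - g (X ω)) * m0 (X ω)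
      - g (X ω) * (t (X ω) * (m00 (X ω) / m10 (X ω))) * μ10 (X ω)|
      ≤ 1 * M + 1 * (M * (M / ε)) * M := by
    filter_upwards [hP] with ω hω
    obtain ⟨⟨hg1, hg2, hq1, hq2, hμ10ε, hμ11M, hμ10M, hm0M, hYM, hτM⟩,
      hm10ε, hm11M, hm10M, hm00M, ht0, htM⟩ := hω
    exact DRaux.bsub (DRaux.bmul (abs_le.2 ⟨by linarith, by linarith⟩) hm0M)
      (DRaux.bmul (DRaux.bmul (abs_le.2 ⟨by linarith, by linarith⟩)
        (DRaux.bmul (abs_le.2 ⟨by linarith, htM⟩) (DRaux.bdiv hε0 hm00M hm10ε))) hμ10M)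
  -- the key identity
  have hkey : (∫ ω, H1 P X S A Y q m11 m10 m00 t ω ∂P) -
      condMean P (fun ω => μ11 (X ω) / μ10 (X ω) * Y ω) {ω | S ω = 0}
      = k⁻¹ * ∫ ω, (m11 (X ω) / m10 (X ω) - μ11 (X ω) / μ10 (X ω)) *
          ((1 - g (X ω)) * m0 (X ω)
            - g (X ω) * (t (X ω) * (m00 (X ω) / m10 (X ω))) * μ10 (X ω)) ∂P := by
    -- integrability of the three body pieces
    have J0 : Integrable (fun ω => (1 - S ω) * (m11 (X ω) / m10 (X ω) * Y ω)) P := by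
      refine Ib _ ((measurable_const.sub hS).mul ((hm11m.div hm10m |>.comp hX).mul hY))
        (1 * (M / ε * M)) ?_
      filter_upwards [hP] with ω hω
      obtain ⟨⟨_, _, _, _, _, _, _, _, hYM, _⟩, hm10ε, hm11M, _⟩ := hω
      exact DRaux.bmul (hSb' ω) (DRaux.bmul (DRaux.bdiv hε0 hm11M hm10ε) hYM)
    have J1a : Integrable (fun ω => S ω * A ω *
        (t (X ω) * (m00 (X ω) / m10 (X ω)) / q (X ω) * (Y ω - m11 (X ω)))) P := by
      refine Ib _ ((hS.mul hA).mul ((((htm.mul (hm00m.div hm10m)).div hqm).comp hX).mul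
        (hY.sub (hm11m.comp hX)))) (1 * 1 * (M * (M / ε) / ε * (M + M))) ?_
      filter_upwards [hP] with ω hω
      obtain ⟨⟨_, _, hq1, _, _, _, _, _, hYM, _⟩, hm10ε, hm11M, _, hm00M, ht0, htM⟩ := hω
      exact DRaux.bmul (DRaux.bmul (hSb ω) (hAb ω))
        (DRaux.bmul (DRaux.bdiv hε0 (DRaux.bmul (abs_le.2 ⟨by linarith, htM⟩)
          (DRaux.bdiv hε0 hm00M hm10ε)) (le_trans hq1 (le_abs_self _)))
          (DRaux.bsub hYM hm11M))
    have J1b : Integrable (fun ω => S ω * (1 - A ω) *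
        (m11 (X ω) / m10 (X ω) * (t (X ω) * (m00 (X ω) / m10 (X ω)) / (1 - q (X ω)))
          * (Y ω - m10 (X ω)))) P := by
      refine Ib _ ((hS.mul (measurable_const.sub hA)).mul
        ((((hm11m.div hm10m).mul ((htm.mul (hm00m.div hm10m)).div
          (measurable_const.sub hqm))).comp hX).mul (hY.sub (hm10m.comp hX))))
        (1 * 1 * (M / ε * (M * (M / ε) / ε) * (M + M))) ?_
      filter_upwards [hP] with ω hω
      obtain ⟨⟨_, _, _, hq2, _, _, _, _, hYM, _⟩, hm10ε, hm11M, hm10M, hm00M, ht0, htM⟩ := hω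
      refine DRaux.bmul (DRaux.bmul (hSb ω) (hAb' ω)) (DRaux.bmul (DRaux.bmul
        (DRaux.bdiv hε0 hm11M hm10ε) (DRaux.bdiv hε0 (DRaux.bmul
          (abs_le.2 ⟨by linarith, htM⟩) (DRaux.bdiv hε0 hm00M hm10ε)) ?_))
        (DRaux.bsub hYM hm10M))
      exact le_trans (by linarith) (le_abs_self (1 - q (X ω)))
    -- integrability of the three RHS pieces
    have IR0 : Integrable (fun ω => (1 - g (X ω)) *
        ((m11 (X ω) / m10 (X ω) - μ11 (X ω) / μ10 (X ω)) * m0 (X ω))) P := by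
      refine Ib _ ((measurable_const.sub (hgm.comp hX)).mul
        ((hrdiffm.comp hX).mul (hm0m.comp hX))) (1 * ((M / ε + M / ε) * M)) ?_
      filter_upwards [hP, hrdiffb] with ω hω hb
      obtain ⟨⟨hg1, hg2, _, _, _, _, _, hm0M, _, _⟩, _⟩ := hω
      exact DRaux.bmul (abs_le.2 ⟨by linarith, by linarith⟩) (DRaux.bmul hb hm0M)
    have IR1a : Integrable (fun ω => g (X ω) *
        ((μ11 (X ω) - m11 (X ω)) * (t (X ω) * (m00 (X ω) / m10 (X ω))))) P := by
      refine Ib _ ((hgm.comp hX).mul (((hμ11m.comp hX).sub (hm11m.comp hX)).mul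
        ((htm.comp hX).mul ((hm00m.comp hX).div (hm10m.comp hX)))))
        (1 * ((M + M) * (M * (M / ε)))) ?_
      filter_upwards [hP] with ω hω
      obtain ⟨⟨hg1, hg2, _, _, _, hμ11M, _, _, _, _⟩, hm10ε, hm11M, _, hm00M, ht0, htM⟩ := hω
      exact DRaux.bmul (abs_le.2 ⟨by linarith, by linarith⟩)
        (DRaux.bmul (DRaux.bsub hμ11M hm11M)
          (DRaux.bmul (abs_le.2 ⟨by linarith, htM⟩) (DRaux.bdiv hε0 hm00M hm10ε)))
    have IR1b : Integrable (fun ω => g (X ω) *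
        ((μ10 (X ω) - m10 (X ω)) * (m11 (X ω) / m10 (X ω))
          * (t (X ω) * (m00 (X ω) / m10 (X ω))))) P := by
      refine Ib _ ((hgm.comp hX).mul ((((hμ10m.comp hX).sub (hm10m.comp hX)).mul
        ((hm11m.comp hX).div (hm10m.comp hX))).mul
        ((htm.comp hX).mul ((hm00m.comp hX).div (hm10m.comp hX)))))
        (1 * ((M + M) * (M / ε) * (M * (M / ε)))) ?_
      filter_upwards [hP] with ω hω
      obtain ⟨⟨hg1, hg2, _, _, _, _, hμ10M, _, _, _⟩, hm10ε, hm11M, hm10M, hm00M, ht0, htM⟩ := hω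
      exact DRaux.bmul (abs_le.2 ⟨by linarith, by linarith⟩)
        (DRaux.bmul (DRaux.bmul (DRaux.bsub hμ10M hm10M) (DRaux.bdiv hε0 hm11M hm10ε))
          (DRaux.bmul (abs_le.2 ⟨by linarith, htM⟩) (DRaux.bdiv hε0 hm00M hm10ε)))
    have hH1 : ∫ ω, H1 P X S A Y q m11 m10 m00 t ω ∂P
        = k⁻¹ * ((∫ ω, (1 - S ω) * (m11 (X ω) / m10 (X ω) * Y ω) ∂P)
          + ((∫ ω, S ω * A ω *
              (t (X ω) * (m00 (X ω) / m10 (X ω)) / q (X ω) * (Y ω - m11 (X ω))) ∂P)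
            - ∫ ω, S ω * (1 - A ω) *
              (m11 (X ω) / m10 (X ω) * (t (X ω) * (m00 (X ω) / m10 (X ω)) / (1 - q (X ω)))
                * (Y ω - m10 (X ω))) ∂P)) := by
      calc ∫ ω, H1 P X S A Y q m11 m10 m00 t ω ∂P
          = ∫ ω, k⁻¹ * ((1 - S ω) * (m11 (X ω) / m10 (X ω) * Y ω)
              + (S ω * A ω *
                  (t (X ω) * (m00 (X ω) / m10 (X ω)) / q (X ω) * (Y ω - m11 (X ω)))
                - S ω * (1 - A ω) *
                  (m11 (X ω) / m10 (X ω) * (t (X ω) * (m00 (X ω) / m10 (X ω)) / (1 - q (X ω)))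
                    * (Y ω - m10 (X ω))))) ∂P := by
            refine icongr fun ω => ?_
            simp only [H1]
            rw [← hk_def]
            ring
        _ = k⁻¹ * ∫ ω, ((1 - S ω) * (m11 (X ω) / m10 (X ω) * Y ω)
              + (S ω * A ω *
                  (t (X ω) * (m00 (X ω) / m10 (X ω)) / q (X ω) * (Y ω - m11 (X ω)))
                - S ω * (1 - A ω) *
                  (m11 (X ω) / m10 (X ω) * (t (X ω) * (m00 (X ω) / m10 (X ω)) / (1 - q (X ω)))
                    * (Y ω - m10 (X ω))))) ∂P := integral_const_mul _ _
        _ = k⁻¹ * ((∫ ω, (1 - S ω) * (m11 (X ω) / m10 (X ω) * Y ω) ∂P)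
              + ∫ ω, (S ω * A ω *
                  (t (X ω) * (m00 (X ω) / m10 (X ω)) / q (X ω) * (Y ω - m11 (X ω)))
                - S ω * (1 - A ω) *
                  (m11 (X ω) / m10 (X ω) * (t (X ω) * (m00 (X ω) / m10 (X ω)) / (1 - q (X ω)))
                    * (Y ω - m10 (X ω)))) ∂P) :=
            congrArg (fun z => k⁻¹ * z) (integral_add J0 (J1a.sub J1b))
        _ = k⁻¹ * ((∫ ω, (1 - S ω) * (m11 (X ω) / m10 (X ω) * Y ω) ∂P)
              + ((∫ ω, S ω * A ω *
                  (t (X ω) * (m00 (X ω) / m10 (X ω)) / q (X ω) * (Y ω - m11 (X ω))) ∂P)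
                - ∫ ω, S ω * (1 - A ω) *
                  (m11 (X ω) / m10 (X ω) * (t (X ω) * (m00 (X ω) / m10 (X ω)) / (1 - q (X ω)))
                    * (Y ω - m10 (X ω))) ∂P)) :=
            congrArg (fun z => k⁻¹ * ((∫ ω, (1 - S ω) * (m11 (X ω) / m10 (X ω) * Y ω) ∂P) + z))
              (integral_sub J1a J1b)
    have hcond : condMean P (fun ω => μ11 (X ω) / μ10 (X ω) * Y ω) {ω | S ω = 0}
        = k⁻¹ * ∫ ω in {ω | S ω = 0}, μ11 (X ω) / μ10 (X ω) * Y ω ∂P := by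
      simp only [condMean]
      rw [← hk_def, div_eq_inv_mul]
    rw [hH1, hcond]
    have hcomb : (∫ ω, (1 - g (X ω)) *
          ((m11 (X ω) / m10 (X ω) - μ11 (X ω) / μ10 (X ω)) * m0 (X ω)) ∂P)
        + ((∫ ω, g (X ω) * ((μ11 (X ω) - m11 (X ω)) * (t (X ω) * (m00 (X ω) / m10 (X ω)))) ∂P)
          - ∫ ω, g (X ω) * ((μ10 (X ω) - m10 (X ω)) * (m11 (X ω) / m10 (X ω))
              * (t (X ω) * (m00 (X ω) / m10 (X ω)))) ∂P)
        = ∫ ω, (m11 (X ω) / m10 (X ω) - μ11 (X ω) / μ10 (X ω)) *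
            ((1 - g (X ω)) * m0 (X ω)
              - g (X ω) * (t (X ω) * (m00 (X ω) / m10 (X ω))) * μ10 (X ω)) ∂P := by
      calc (∫ ω, (1 - g (X ω)) *
            ((m11 (X ω) / m10 (X ω) - μ11 (X ω) / μ10 (X ω)) * m0 (X ω)) ∂P)
          + ((∫ ω, g (X ω) * ((μ11 (X ω) - m11 (X ω)) * (t (X ω) * (m00 (X ω) / m10 (X ω)))) ∂P)
            - ∫ ω, g (X ω) * ((μ10 (X ω) - m10 (X ω)) * (m11 (X ω) / m10 (X ω))
                * (t (X ω) * (m00 (X ω) / m10 (X ω)))) ∂P)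
          = (∫ ω, (1 - g (X ω)) *
              ((m11 (X ω) / m10 (X ω) - μ11 (X ω) / μ10 (X ω)) * m0 (X ω)) ∂P)
            + ∫ ω, (g (X ω) * ((μ11 (X ω) - m11 (X ω)) * (t (X ω) * (m00 (X ω) / m10 (X ω))))
              - g (X ω) * ((μ10 (X ω) - m10 (X ω)) * (m11 (X ω) / m10 (X ω))
                * (t (X ω) * (m00 (X ω) / m10 (X ω))))) ∂P :=
            congrArg (fun z => (∫ ω, (1 - g (X ω)) *
              ((m11 (X ω) / m10 (X ω) - μ11 (X ω) / μ10 (X ω)) * m0 (X ω)) ∂P) + z)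
              (integral_sub IR1a IR1b).symm
        _ = ∫ ω, ((1 - g (X ω)) *
              ((m11 (X ω) / m10 (X ω) - μ11 (X ω) / μ10 (X ω)) * m0 (X ω))
            + (g (X ω) * ((μ11 (X ω) - m11 (X ω)) * (t (X ω) * (m00 (X ω) / m10 (X ω))))
              - g (X ω) * ((μ10 (X ω) - m10 (X ω)) * (m11 (X ω) / m10 (X ω))
                * (t (X ω) * (m00 (X ω) / m10 (X ω)))))) ∂P :=
            (integral_add IR0 (IR1a.sub IR1b)).symm
        _ = ∫ ω, (m11 (X ω) / m10 (X ω) - μ11 (X ω) / μ10 (X ω)) *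
              ((1 - g (X ω)) * m0 (X ω)
                - g (X ω) * (t (X ω) * (m00 (X ω) / m10 (X ω))) * μ10 (X ω)) ∂P := ?_
      refine icongrae ?_
      filter_upwards [hP] with ω hω
      obtain ⟨⟨_, _, _, _, hμ10ε, _⟩, hm10ε, _⟩ := hω
      have h10 : m10 (X ω) ≠ 0 := by
        intro h; rw [h, abs_zero] at hm10ε; linarith
      have hμ10ne : μ10 (X ω) ≠ 0 := by
        intro h; rw [h, abs_zero] at hμ10ε; linarith
      have c1 : m11 (X ω) / m10 (X ω) * m10 (X ω) = m11 (X ω) := div_mul_cancel₀ _ h10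
      have c2 : μ11 (X ω) / μ10 (X ω) * μ10 (X ω) = μ11 (X ω) := div_mul_cancel₀ _ hμ10ne
      linear_combination (g (X ω) * (t (X ω) * (m00 (X ω) / m10 (X ω)))) * c1
        - (g (X ω) * (t (X ω) * (m00 (X ω) / m10 (X ω)))) * c2
    calc k⁻¹ * ((∫ ω, (1 - S ω) * (m11 (X ω) / m10 (X ω) * Y ω) ∂P)
          + ((∫ ω, S ω * A ω *
              (t (X ω) * (m00 (X ω) / m10 (X ω)) / q (X ω) * (Y ω - m11 (X ω))) ∂P)
            - ∫ ω, S ω * (1 - A ω) *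
              (m11 (X ω) / m10 (X ω) * (t (X ω) * (m00 (X ω) / m10 (X ω)) / (1 - q (X ω)))
                * (Y ω - m10 (X ω))) ∂P))
        - k⁻¹ * ∫ ω in {ω | S ω = 0}, μ11 (X ω) / μ10 (X ω) * Y ω ∂P
        = k⁻¹ * (((∫ ω, (1 - S ω) * (m11 (X ω) / m10 (X ω) * Y ω) ∂P)
            - ∫ ω in {ω | S ω = 0}, μ11 (X ω) / μ10 (X ω) * Y ω ∂P)
          + ((∫ ω, S ω * A ω *
              (t (X ω) * (m00 (X ω) / m10 (X ω)) / q (X ω) * (Y ω - m11 (X ω))) ∂P)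
            - ∫ ω, S ω * (1 - A ω) *
              (m11 (X ω) / m10 (X ω) * (t (X ω) * (m00 (X ω) / m10 (X ω)) / (1 - q (X ω)))
                * (Y ω - m10 (X ω))) ∂P)) := by ring
      _ = k⁻¹ * ∫ ω, (m11 (X ω) / m10 (X ω) - μ11 (X ω) / μ10 (X ω)) *
            ((1 - g (X ω)) * m0 (X ω)
              - g (X ω) * (t (X ω) * (m00 (X ω) / m10 (X ω))) * μ10 (X ω)) ∂P := by
          rw [hT0, hT1a, hT1b, hcomb]
  -- measurability shorthands
  have Um : Measurable fun ω => m11 (X ω) / m10 (X ω) - μ11 (X ω) / μ10 (X ω) :=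
    hrdiffm.comp hX
  have am : Measurable fun ω => m00 (X ω) - m0 (X ω) := (hm00m.comp hX).sub (hm0m.comp hX)
  have bm : Measurable fun ω => t (X ω) - (1 - g (X ω)) / g (X ω) :=
    (htm.comp hX).sub ((measurable_const.sub (hgm.comp hX)).div (hgm.comp hX))
  have cm : Measurable fun ω => m10 (X ω) - μ10 (X ω) := (hm10m.comp hX).sub (hμ10m.comp hX)
  -- a.e. bounds for a, b, c
  have hab : ∀ᵐ ω ∂P, |m00 (X ω) - m0 (X ω)| ≤ M + M := by
    filter_upwards [hP] with ω hω
    exact DRaux.bsub hω.2.2.2.2.1 hω.1.2.2.2.2.2.2.2.1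
  have hcb : ∀ᵐ ω ∂P, |m10 (X ω) - μ10 (X ω)| ≤ M + M := by
    filter_upwards [hP] with ω hω
    exact DRaux.bsub hω.2.2.2.1 hω.1.2.2.2.2.2.2.1
  have hτabs : ∀ᵐ ω ∂P, |(1 - g (X ω)) / g (X ω)| ≤ M := by
    filter_upwards [hP] with ω hω
    obtain ⟨⟨hg1, hg2, _, _, _, _, _, _, _, hτM⟩, _⟩ := hω
    have hτ0 : 0 ≤ (1 - g (X ω)) / g (X ω) :=
      div_nonneg (by linarith) (by linarith)
    exact abs_le.2 ⟨by linarith, hτM⟩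
  have hbb : ∀ᵐ ω ∂P, |t (X ω) - (1 - g (X ω)) / g (X ω)| ≤ M + M := by
    filter_upwards [hP, hτabs] with ω hω hτ
    obtain ⟨_, _, _, _, _, ht0, htM⟩ := hω
    exact DRaux.bsub (abs_le.2 ⟨by linarith, htM⟩) hτ
  -- integrabilities
  have Iua : Integrable (fun ω => |m11 (X ω) / m10 (X ω) - μ11 (X ω) / μ10 (X ω)| *
      |m00 (X ω) - m0 (X ω)|) P := by
    refine Ib _ (Um.abs.mul am.abs) ((M / ε + M / ε) * (M + M)) ?_
    filter_upwards [hrdiffb, hab] with ω h1 h2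
    exact DRaux.bmul (DRaux.babs h1) (DRaux.babs h2)
  have Iub : Integrable (fun ω => |m11 (X ω) / m10 (X ω) - μ11 (X ω) / μ10 (X ω)| *
      |t (X ω) - (1 - g (X ω)) / g (X ω)|) P := by
    refine Ib _ (Um.abs.mul bm.abs) ((M / ε + M / ε) * (M + M)) ?_
    filter_upwards [hrdiffb, hbb] with ω h1 h2
    exact DRaux.bmul (DRaux.babs h1) (DRaux.babs h2)
  have Iuc : Integrable (fun ω => |m11 (X ω) / m10 (X ω) - μ11 (X ω) / μ10 (X ω)| *
      |m10 (X ω) - μ10 (X ω)|) P := by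
    refine Ib _ (Um.abs.mul cm.abs) ((M / ε + M / ε) * (M + M)) ?_
    filter_upwards [hrdiffb, hcb] with ω h1 h2
    exact DRaux.bmul (DRaux.babs h1) (DRaux.babs h2)
  have IuW : Integrable (fun ω => (m11 (X ω) / m10 (X ω) - μ11 (X ω) / μ10 (X ω)) *
      ((1 - g (X ω)) * m0 (X ω)
        - g (X ω) * (t (X ω) * (m00 (X ω) / m10 (X ω))) * μ10 (X ω))) P := by
    refine Ib _ (Um.mul hWm) ((M / ε + M / ε) * (1 * M + 1 * (M * (M / ε)) * M)) ?_
    filter_upwards [hrdiffb, hWb] with ω h1 h2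
    exact DRaux.bmul h1 h2
  -- norm notation
  have hNu : normX P X (fun x => m11 x / m10 x - μ11 x / μ10 x)
      = Real.sqrt (∫ ω, (m11 (X ω) / m10 (X ω) - μ11 (X ω) / μ10 (X ω)) ^ 2 ∂P) := rfl
  have hNa : normX P X (fun x => m00 x - m0 x)
      = Real.sqrt (∫ ω, (m00 (X ω) - m0 (X ω)) ^ 2 ∂P) := rfl
  have hNb : normX P X (fun x => t x - (1 - g x) / g x)
      = Real.sqrt (∫ ω, (t (X ω) - (1 - g (X ω)) / g (X ω)) ^ 2 ∂P) := rfl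
  have hNc : normX P X (fun x => m10 x - μ10 x)
      = Real.sqrt (∫ ω, (m10 (X ω) - μ10 (X ω)) ^ 2 ∂P) := rfl
  -- Cauchy-Schwarz bounds
  have csa := DRaux.cauchy_schwarz P _ _ Um.aestronglyMeasurable am.aestronglyMeasurable
    hrdiffb hab
  have csb := DRaux.cauchy_schwarz P _ _ Um.aestronglyMeasurable bm.aestronglyMeasurable
    hrdiffb hbb
  have csc := DRaux.cauchy_schwarz P _ _ Um.aestronglyMeasurable cm.aestronglyMeasurable
    hrdiffb hcb
  rw [hkey, hNu, hNa, hNb, hNc]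
  have hknn : (0:ℝ) ≤ k⁻¹ := inv_nonneg.2 hkpos.le
  have hNu0 := Real.sqrt_nonneg (∫ ω, (m11 (X ω) / m10 (X ω) - μ11 (X ω) / μ10 (X ω)) ^ 2 ∂P)
  have hNa0 := Real.sqrt_nonneg (∫ ω, (m00 (X ω) - m0 (X ω)) ^ 2 ∂P)
  have hNb0 := Real.sqrt_nonneg (∫ ω, (t (X ω) - (1 - g (X ω)) / g (X ω)) ^ 2 ∂P)
  have hNc0 := Real.sqrt_nonneg (∫ ω, (m10 (X ω) - μ10 (X ω)) ^ 2 ∂P)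
  have hM2 : M ≤ M ^ 2 / ε := by
    rw [le_div_iff₀ hε0]
    nlinarith
  calc |k⁻¹ * ∫ ω, (m11 (X ω) / m10 (X ω) - μ11 (X ω) / μ10 (X ω)) *
          ((1 - g (X ω)) * m0 (X ω)
            - g (X ω) * (t (X ω) * (m00 (X ω) / m10 (X ω))) * μ10 (X ω)) ∂P|
      = k⁻¹ * |∫ ω, (m11 (X ω) / m10 (X ω) - μ11 (X ω) / μ10 (X ω)) *
          ((1 - g (X ω)) * m0 (X ω)
            - g (X ω) * (t (X ω) * (m00 (X ω) / m10 (X ω))) * μ10 (X ω)) ∂P| := by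
        rw [abs_mul, abs_of_nonneg hknn]
    _ ≤ k⁻¹ * ∫ ω, |m11 (X ω) / m10 (X ω) - μ11 (X ω) / μ10 (X ω)| *
          |(1 - g (X ω)) * m0 (X ω)
            - g (X ω) * (t (X ω) * (m00 (X ω) / m10 (X ω))) * μ10 (X ω)| ∂P := by
        refine mul_le_mul_of_nonneg_left ?_ hknn
        simpa [Real.norm_eq_abs] using norm_integral_le_integral_norm (μ := P)
          (f := fun ω => (m11 (X ω) / m10 (X ω) - μ11 (X ω) / μ10 (X ω)) *
            ((1 - g (X ω)) * m0 (X ω)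
              - g (X ω) * (t (X ω) * (m00 (X ω) / m10 (X ω))) * μ10 (X ω)))
    _ ≤ k⁻¹ * ∫ ω, (M * (|m11 (X ω) / m10 (X ω) - μ11 (X ω) / μ10 (X ω)| *
            |m00 (X ω) - m0 (X ω)|)
          + (M * (|m11 (X ω) / m10 (X ω) - μ11 (X ω) / μ10 (X ω)| *
              |t (X ω) - (1 - g (X ω)) / g (X ω)|)
            + M * (M / ε) * (|m11 (X ω) / m10 (X ω) - μ11 (X ω) / μ10 (X ω)| *
              |m10 (X ω) - μ10 (X ω)|))) ∂P := by
        refine mul_le_mul_of_nonneg_left ?_ hknn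
        have IuWabs : Integrable (fun ω =>
            |m11 (X ω) / m10 (X ω) - μ11 (X ω) / μ10 (X ω)| *
            |(1 - g (X ω)) * m0 (X ω)
              - g (X ω) * (t (X ω) * (m00 (X ω) / m10 (X ω))) * μ10 (X ω)|) P := by
          refine Ib _ (Um.abs.mul hWm.abs)
            ((M / ε + M / ε) * (1 * M + 1 * (M * (M / ε)) * M)) ?_
          filter_upwards [hrdiffb, hWb] with ω h1 h2
          exact DRaux.bmul (DRaux.babs h1) (DRaux.babs h2)
        refine integral_mono_ae IuWabs
          ((Iua.const_mul M).add ((Iub.const_mul M).add (Iuc.const_mul (M * (M / ε))))) ?_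
        filter_upwards [hP, hτabs] with ω hω hτ
        obtain ⟨⟨hg1, hg2, hq1, hq2, hμ10ε, hμ11M, hμ10M, hm0M, hYM, hτM⟩,
          hm10ε, hm11M, hm10M, hm00M, ht0, htM⟩ := hω
        have hgne : g (X ω) ≠ 0 := ne_of_gt (lt_of_lt_of_le hε0 hg1)
        have h10ne : m10 (X ω) ≠ 0 := by
          intro h; rw [h, abs_zero] at hm10ε; linarith
        have c3 : (1 - g (X ω)) / g (X ω) * g (X ω) = 1 - g (X ω) :=
          div_mul_cancel₀ _ hgne
        have c4 : m00 (X ω) / m10 (X ω) * m10 (X ω) = m00 (X ω) :=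
          div_mul_cancel₀ _ h10ne
        have hWid : (1 - g (X ω)) * m0 (X ω)
            - g (X ω) * (t (X ω) * (m00 (X ω) / m10 (X ω))) * μ10 (X ω)
            = g (X ω) * ((1 - g (X ω)) / g (X ω) * (m0 (X ω) - m00 (X ω))
              + m00 (X ω) * ((1 - g (X ω)) / g (X ω) - t (X ω))
              + t (X ω) * (m00 (X ω) / m10 (X ω)) * (m10 (X ω) - μ10 (X ω))) := by
          linear_combination (- m0 (X ω)) * c3 - (g (X ω) * t (X ω)) * c4
        have hA : |(1 - g (X ω)) / g (X ω) * (m0 (X ω) - m00 (X ω))|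
            ≤ M * |m00 (X ω) - m0 (X ω)| := by
          rw [abs_mul, abs_sub_comm]
          exact mul_le_mul_of_nonneg_right hτ (abs_nonneg _)
        have hB : |m00 (X ω) * ((1 - g (X ω)) / g (X ω) - t (X ω))|
            ≤ M * |t (X ω) - (1 - g (X ω)) / g (X ω)| := by
          rw [abs_mul, abs_sub_comm]
          exact mul_le_mul_of_nonneg_right hm00M (abs_nonneg _)
        have hC : |t (X ω) * (m00 (X ω) / m10 (X ω)) * (m10 (X ω) - μ10 (X ω))|
            ≤ M * (M / ε) * |m10 (X ω) - μ10 (X ω)| := by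
          rw [abs_mul]
          exact mul_le_mul_of_nonneg_right
            (DRaux.bmul (abs_le.2 ⟨by linarith, htM⟩) (DRaux.bdiv hε0 hm00M hm10ε))
            (abs_nonneg _)
        have hWbd : |(1 - g (X ω)) * m0 (X ω)
            - g (X ω) * (t (X ω) * (m00 (X ω) / m10 (X ω))) * μ10 (X ω)|
            ≤ M * |m00 (X ω) - m0 (X ω)| + (M * |t (X ω) - (1 - g (X ω)) / g (X ω)|
              + M * (M / ε) * |m10 (X ω) - μ10 (X ω)|) := by
          rw [hWid, abs_mul]
          have hsum := (abs_add_le ((1 - g (X ω)) / g (X ω) * (m0 (X ω) - m00 (X ω))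
              + m00 (X ω) * ((1 - g (X ω)) / g (X ω) - t (X ω)))
              (t (X ω) * (m00 (X ω) / m10 (X ω)) * (m10 (X ω) - μ10 (X ω)))).trans
            (add_le_add_left (abs_add_le _ _) _)
          have hgabs : |g (X ω)| ≤ 1 := abs_le.2 ⟨by linarith, by linarith⟩
          calc |g (X ω)| * |(1 - g (X ω)) / g (X ω) * (m0 (X ω) - m00 (X ω))
                + m00 (X ω) * ((1 - g (X ω)) / g (X ω) - t (X ω))
                + t (X ω) * (m00 (X ω) / m10 (X ω)) * (m10 (X ω) - μ10 (X ω))|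
              ≤ 1 * (|(1 - g (X ω)) / g (X ω) * (m0 (X ω) - m00 (X ω))|
                + |m00 (X ω) * ((1 - g (X ω)) / g (X ω) - t (X ω))|
                + |t (X ω) * (m00 (X ω) / m10 (X ω)) * (m10 (X ω) - μ10 (X ω))|) :=
                mul_le_mul hgabs hsum (abs_nonneg _) one_pos.le
            _ ≤ M * |m00 (X ω) - m0 (X ω)| + (M * |t (X ω) - (1 - g (X ω)) / g (X ω)|
                + M * (M / ε) * |m10 (X ω) - μ10 (X ω)|) := by
                rw [one_mul]
                linarith [hA, hB, hC]
        calc |m11 (X ω) / m10 (X ω) - μ11 (X ω) / μ10 (X ω)| *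
              |(1 - g (X ω)) * m0 (X ω)
                - g (X ω) * (t (X ω) * (m00 (X ω) / m10 (X ω))) * μ10 (X ω)|
            ≤ |m11 (X ω) / m10 (X ω) - μ11 (X ω) / μ10 (X ω)| *
              (M * |m00 (X ω) - m0 (X ω)| + (M * |t (X ω) - (1 - g (X ω)) / g (X ω)|
                + M * (M / ε) * |m10 (X ω) - μ10 (X ω)|)) :=
              mul_le_mul_of_nonneg_left hWbd (abs_nonneg _)
          _ = M * (|m11 (X ω) / m10 (X ω) - μ11 (X ω) / μ10 (X ω)| *
                |m00 (X ω) - m0 (X ω)|)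
              + (M * (|m11 (X ω) / m10 (X ω) - μ11 (X ω) / μ10 (X ω)| *
                  |t (X ω) - (1 - g (X ω)) / g (X ω)|)
                + M * (M / ε) * (|m11 (X ω) / m10 (X ω) - μ11 (X ω) / μ10 (X ω)| *
                  |m10 (X ω) - μ10 (X ω)|)) := by ring
    _ = k⁻¹ * ((∫ ω, M * (|m11 (X ω) / m10 (X ω) - μ11 (X ω) / μ10 (X ω)| *
            |m00 (X ω) - m0 (X ω)|) ∂P)
          + ((∫ ω, M * (|m11 (X ω) / m10 (X ω) - μ11 (X ω) / μ10 (X ω)| *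
              |t (X ω) - (1 - g (X ω)) / g (X ω)|) ∂P)
            + ∫ ω, M * (M / ε) * (|m11 (X ω) / m10 (X ω) - μ11 (X ω) / μ10 (X ω)| *
              |m10 (X ω) - μ10 (X ω)|) ∂P)) := by
        refine congrArg (fun z => k⁻¹ * z) ?_
        calc ∫ ω, (M * (|m11 (X ω) / m10 (X ω) - μ11 (X ω) / μ10 (X ω)| *
                |m00 (X ω) - m0 (X ω)|)
              + (M * (|m11 (X ω) / m10 (X ω) - μ11 (X ω) / μ10 (X ω)| *
                  |t (X ω) - (1 - g (X ω)) / g (X ω)|)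
                + M * (M / ε) * (|m11 (X ω) / m10 (X ω) - μ11 (X ω) / μ10 (X ω)| *
                  |m10 (X ω) - μ10 (X ω)|))) ∂P
            = (∫ ω, M * (|m11 (X ω) / m10 (X ω) - μ11 (X ω) / μ10 (X ω)| *
                |m00 (X ω) - m0 (X ω)|) ∂P)
              + ∫ ω, (M * (|m11 (X ω) / m10 (X ω) - μ11 (X ω) / μ10 (X ω)| *
                  |t (X ω) - (1 - g (X ω)) / g (X ω)|)
                + M * (M / ε) * (|m11 (X ω) / m10 (X ω) - μ11 (X ω) / μ10 (X ω)| *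
                  |m10 (X ω) - μ10 (X ω)|)) ∂P :=
              integral_add (Iua.const_mul M)
                ((Iub.const_mul M).add (Iuc.const_mul (M * (M / ε))))
          _ = (∫ ω, M * (|m11 (X ω) / m10 (X ω) - μ11 (X ω) / μ10 (X ω)| *
                |m00 (X ω) - m0 (X ω)|) ∂P)
              + ((∫ ω, M * (|m11 (X ω) / m10 (X ω) - μ11 (X ω) / μ10 (X ω)| *
                  |t (X ω) - (1 - g (X ω)) / g (X ω)|) ∂P)
                + ∫ ω, M * (M / ε) * (|m11 (X ω) / m10 (X ω) - μ11 (X ω) / μ10 (X ω)| *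
                  |m10 (X ω) - μ10 (X ω)|) ∂P) :=
              congrArg (fun z => (∫ ω, M * (|m11 (X ω) / m10 (X ω) - μ11 (X ω) / μ10 (X ω)| *
                |m00 (X ω) - m0 (X ω)|) ∂P) + z)
                (integral_add (Iub.const_mul M) (Iuc.const_mul (M * (M / ε))))
    _ = k⁻¹ * (M * (∫ ω, |m11 (X ω) / m10 (X ω) - μ11 (X ω) / μ10 (X ω)| *
            |m00 (X ω) - m0 (X ω)| ∂P)
          + (M * (∫ ω, |m11 (X ω) / m10 (X ω) - μ11 (X ω) / μ10 (X ω)| *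
              |t (X ω) - (1 - g (X ω)) / g (X ω)| ∂P)
            + M * (M / ε) * ∫ ω, |m11 (X ω) / m10 (X ω) - μ11 (X ω) / μ10 (X ω)| *
              |m10 (X ω) - μ10 (X ω)| ∂P)) := by
        rw [integral_const_mul, integral_const_mul, integral_const_mul]
    _ ≤ k⁻¹ * (M ^ 2 / ε) *
        Real.sqrt (∫ ω, (m11 (X ω) / m10 (X ω) - μ11 (X ω) / μ10 (X ω)) ^ 2 ∂P) *
        (Real.sqrt (∫ ω, (m00 (X ω) - m0 (X ω)) ^ 2 ∂P)
          + Real.sqrt (∫ ω, (m10 (X ω) - μ10 (X ω)) ^ 2 ∂P)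
          + Real.sqrt (∫ ω, (t (X ω) - (1 - g (X ω)) / g (X ω)) ^ 2 ∂P)) := by
        set NU := Real.sqrt (∫ ω, (m11 (X ω) / m10 (X ω) - μ11 (X ω) / μ10 (X ω)) ^ 2 ∂P)
          with hNU
        set NA := Real.sqrt (∫ ω, (m00 (X ω) - m0 (X ω)) ^ 2 ∂P) with hNA
        set NB := Real.sqrt (∫ ω, (t (X ω) - (1 - g (X ω)) / g (X ω)) ^ 2 ∂P) with hNB
        set NC := Real.sqrt (∫ ω, (m10 (X ω) - μ10 (X ω)) ^ 2 ∂P) with hNC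
        have e1 : ∫ ω, |m11 (X ω) / m10 (X ω) - μ11 (X ω) / μ10 (X ω)| *
            |m00 (X ω) - m0 (X ω)| ∂P ≤ NU * NA := csa
        have e2 : ∫ ω, |m11 (X ω) / m10 (X ω) - μ11 (X ω) / μ10 (X ω)| *
            |t (X ω) - (1 - g (X ω)) / g (X ω)| ∂P ≤ NU * NB := csb
        have e3 : ∫ ω, |m11 (X ω) / m10 (X ω) - μ11 (X ω) / μ10 (X ω)| *
            |m10 (X ω) - μ10 (X ω)| ∂P ≤ NU * NC := csc
        have hNU0 : 0 ≤ NU := Real.sqrt_nonneg _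
        have hNA0 : 0 ≤ NA := Real.sqrt_nonneg _
        have hNB0 : 0 ≤ NB := Real.sqrt_nonneg _
        have hNC0 : 0 ≤ NC := Real.sqrt_nonneg _
        calc k⁻¹ * (M * (∫ ω, |m11 (X ω) / m10 (X ω) - μ11 (X ω) / μ10 (X ω)| *
                |m00 (X ω) - m0 (X ω)| ∂P)
              + (M * (∫ ω, |m11 (X ω) / m10 (X ω) - μ11 (X ω) / μ10 (X ω)| *
                  |t (X ω) - (1 - g (X ω)) / g (X ω)| ∂P)
                + M * (M / ε) * ∫ ω, |m11 (X ω) / m10 (X ω) - μ11 (X ω) / μ10 (X ω)| *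
                  |m10 (X ω) - μ10 (X ω)| ∂P))
            ≤ k⁻¹ * (M * (NU * NA) + (M * (NU * NB) + M * (M / ε) * (NU * NC))) := by
              refine mul_le_mul_of_nonneg_left
                (add_le_add (mul_le_mul_of_nonneg_left e1 hM0.le)
                  (add_le_add (mul_le_mul_of_nonneg_left e2 hM0.le)
                    (mul_le_mul_of_nonneg_left e3 (by positivity)))) hknn
          _ ≤ k⁻¹ * (M ^ 2 / ε * (NU * NA) + (M ^ 2 / ε * (NU * NB)
                + M ^ 2 / ε * (NU * NC))) := by
              refine mul_le_mul_of_nonneg_left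
                (add_le_add (mul_le_mul_of_nonneg_right hM2 (mul_nonneg hNU0 hNA0))
                  (add_le_add (mul_le_mul_of_nonneg_right hM2 (mul_nonneg hNU0 hNB0))
                    (le_of_eq (by ring)))) hknn
          _ = k⁻¹ * (M ^ 2 / ε) * NU * (NA + NC + NB) := by ring
end
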